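/- arXiv:0710.2641 — 5 statements merged into one kernel-verified Lean document; each statement's English description precedes it below -/
import Mathlib

section
/- Let P be graded by positive weights W = (w_1,…,w_n), let O be an order ideal, and let I ⊂ P be a homogeneous zero-dimensional ideal that has an O-border basis G = {g_1,…,g_ν}. Then every g_j is a homogeneous polynomial (of degree deg_W(b_j)). -/
open MvPolynomial Finsupp

open scoped Classical in
/-- The border of a finite set of monomials (represented as exponent vectors). -/
noncomputable def borderSet (n : ℕ) (O : Finset (Fin n →₀ ℕ)) : Finset (Fin n →₀ ℕ) :=
  (O.biUnion (fun t => Finset.image (fun k => t + Finsupp.single k 1) Finset.univ)) \ O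

/-- The `W`-degree of a monomial with respect to the weights `w`. -/
def degW (n : ℕ) (w : Fin n → ℕ) (m : Fin n →₀ ℕ) : ℕ := ∑ i, w i * m i

/-- `g` is an `O`-border basis of `I`: each `g b` (for `b` in the border) lies in `I` and has
the prebasis shape `b - Σ c_i t_i`, and `P = I ⊕ ⟨O⟩_K` as `K`-vector spaces. -/
def IsBorderBasis (K : Type*) [Field K] (n : ℕ) (O : Finset (Fin n →₀ ℕ))
    (I : Ideal (MvPolynomial (Fin n) K)) (g : (Fin n →₀ ℕ) → MvPolynomial (Fin n) K) : Prop :=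
  (∀ b ∈ borderSet n O, g b ∈ I ∧ ∃ c : (Fin n →₀ ℕ) → K,
      g b = monomial b 1 - ∑ t ∈ O, MvPolynomial.C (c t) * monomial t 1) ∧
  IsCompl (Submodule.restrictScalars K I)
    (Submodule.span K {p : MvPolynomial (Fin n) K | ∃ t ∈ O, p = monomial t 1})

/-- If a `W`-homogeneous zero-dimensional ideal has an `O`-border basis, then each border basis
element `g b` is homogeneous of `W`-degree `deg_W(b)`. -/
theorem borderBasis_of_homogeneous_ideal_is_homogeneous (K : Type*) [Field K] (n : ℕ)
    (w : Fin n → ℕ) (hw : ∀ i, 0 < w i)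
    (O : Finset (Fin n →₀ ℕ)) (hO : ∀ t ∈ O, ∀ s : Fin n →₀ ℕ, s ≤ t → s ∈ O)
    (I : Ideal (MvPolynomial (Fin n) K))
    (hIhom : ∀ f ∈ I, ∀ d : ℕ,
      (∑ m ∈ f.support.filter (fun m => degW n w m = d), monomial m (coeff m f)) ∈ I)
    (g : (Fin n →₀ ℕ) → MvPolynomial (Fin n) K)
    (hg : IsBorderBasis K n O I g) :
    ∀ b ∈ borderSet n O, ∀ m ∈ (g b).support, degW n w m = degW n w b := by
  classical
  intro b hb m hm
  obtain ⟨hgI, c, hgc⟩ := hg.1 b hb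
  by_contra hne
  set d := degW n w m with hd
  set p := ∑ m' ∈ (g b).support.filter (fun m' => degW n w m' = d),
      monomial m' (coeff m' (g b)) with hp
  have hpI : p ∈ I := hIhom (g b) hgI d
  have hsupp : ∀ m' ∈ (g b).support, m' = b ∨ m' ∈ O := by
    intro m' hm'
    by_contra hcon
    push_neg at hcon
    obtain ⟨h1, h2⟩ := hcon
    have hz : coeff m' (g b) = 0 := by
      rw [hgc]
      rw [coeff_sub, coeff_monomial, MvPolynomial.coeff_sum]
      have : ∀ t ∈ O, coeff m' (MvPolynomial.C (c t) * monomial t (1:K)) = 0 := by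
        intro t ht
        rw [coeff_C_mul, coeff_monomial]
        have : t ≠ m' := fun h => h2 (h ▸ ht)
        simp [this]
      rw [Finset.sum_eq_zero this]
      simp [Ne.symm h1]
    exact (MvPolynomial.mem_support_iff.mp hm') hz
  have hpspan : p ∈ Submodule.span K
      {q : MvPolynomial (Fin n) K | ∃ t ∈ O, q = monomial t 1} := by
    apply Submodule.sum_mem
    intro m' hm'
    rw [Finset.mem_filter] at hm'
    have hmO : m' ∈ O := by
      rcases hsupp m' hm'.1 with h | h
      · exact absurd (by rw [← hm'.2, h] : d = degW n w b) hne
      · exact h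
    have heq : monomial m' (coeff m' (g b)) = (coeff m' (g b)) • monomial m' (1:K) := by
      simp [smul_monomial]
    rw [heq]
    exact Submodule.smul_mem _ _ (Submodule.subset_span ⟨m', hmO, rfl⟩)
  have hp0 : p = 0 := by
    have hdisj := hg.2.disjoint
    exact Submodule.disjoint_def.mp hdisj p hpI hpspan
  have hcm : coeff m p = coeff m (g b) := by
    rw [hp, MvPolynomial.coeff_sum]
    have hmem : m ∈ (g b).support.filter (fun m' => degW n w m' = d) :=
      Finset.mem_filter.mpr ⟨hm, rfl⟩
    rw [Finset.sum_eq_single_of_mem m hmem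
      (fun m' _ hne' => by rw [coeff_monomial]; simp [hne']), coeff_monomial]
    simp
  rw [hp0] at hcm
  exact (MvPolynomial.mem_support_iff.mp hm) hcm.symm
end

section
/- Let W be a row of positive integer weights and suppose I ⊂ P is zero-dimensional with an O-border basis G = {g_1,…,g_ν} such that b_j ∈ Supp(DF_W(g_j)) for all j. Then the degree form ideal DF_W(I) has an O-border basis, namely DF_W(G) = {DF_W(g_1),…,DF_W(g_ν)}. -/
open MvPolynomial Finsupp

/-- The degree form `DF_W(f)`: the homogeneous component of `f` of maximal `W`-degree. -/
noncomputable def DF (K : Type*) [Field K] (n : ℕ) (w : Fin n → ℕ)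
    (f : MvPolynomial (Fin n) K) : MvPolynomial (Fin n) K :=
  ∑ m ∈ f.support.filter (fun m => degW n w m = f.support.sup (degW n w)),
    monomial m (coeff m f)

/-- The degree form ideal `DF_W(I)`, generated by the degree forms of nonzero elements of `I`. -/
noncomputable def DFideal (K : Type*) [Field K] (n : ℕ) (w : Fin n → ℕ)
    (I : Ideal (MvPolynomial (Fin n) K)) : Ideal (MvPolynomial (Fin n) K) :=
  Ideal.span {p | ∃ f ∈ I, f ≠ 0 ∧ p = DF K n w f}

section Basic
variable {K : Type*} [Field K] {n : ℕ} (w : Fin n → ℕ)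

/-- homogeneous component of degree `d` -/
noncomputable def comp (d : ℕ) (f : MvPolynomial (Fin n) K) : MvPolynomial (Fin n) K :=
  ∑ m ∈ f.support.filter (fun m => degW n w m = d), monomial m (coeff m f)

lemma degW_add (a b : Fin n →₀ ℕ) : degW n w (a + b) = degW n w a + degW n w b := by
  simp [degW, mul_add, Finset.sum_add_distrib]

lemma coeff_comp (d : ℕ) (f : MvPolynomial (Fin n) K) (m : Fin n →₀ ℕ) :
    coeff m (comp w d f) = if degW n w m = d then coeff m f else 0 := by
  unfold comp
  rw [coeff_sum]
  simp only [coeff_monomial]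
  by_cases h : degW n w m = d
  · rw [if_pos h]
    by_cases hm : m ∈ f.support
    · rw [Finset.sum_eq_single m]
      · simp
      · intro b _ hb; rw [if_neg (by exact fun hc => hb hc)]
      · intro hm'; exact absurd (Finset.mem_filter.mpr ⟨hm, h⟩) hm'
    · rw [MvPolynomial.notMem_support_iff.mp hm]
      apply Finset.sum_eq_zero; intro b hb
      by_cases hbm : b = m
      · subst hbm; simp [MvPolynomial.notMem_support_iff.mp hm]
      · rw [if_neg hbm]
  · rw [if_neg h]
    apply Finset.sum_eq_zero; intro b hb
    rcases Finset.mem_filter.mp hb with ⟨_, hbd⟩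
    have : b ≠ m := fun hbm => h (hbm ▸ hbd)
    rw [if_neg this]

lemma DF_eq_comp (f : MvPolynomial (Fin n) K) :
    DF K n w f = comp w (f.support.sup (degW n w)) f := rfl

lemma coeff_DF (f : MvPolynomial (Fin n) K) (m : Fin n →₀ ℕ) :
    coeff m (DF K n w f) =
      if degW n w m = f.support.sup (degW n w) then coeff m f else 0 :=
  coeff_comp w _ f m

lemma support_comp_subset (d : ℕ) (f : MvPolynomial (Fin n) K) :
    (comp w d f).support ⊆ f.support := by
  intro m hm
  rw [MvPolynomial.mem_support_iff] at hm ⊢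
  rw [coeff_comp] at hm
  intro h; apply hm; rw [h]; split <;> rfl

lemma degW_of_mem_support_comp {d : ℕ} {f : MvPolynomial (Fin n) K} {m : Fin n →₀ ℕ}
    (hm : m ∈ (comp w d f).support) : degW n w m = d := by
  rw [MvPolynomial.mem_support_iff, coeff_comp] at hm
  by_contra h; exact hm (if_neg h)

lemma comp_add (d : ℕ) (f g : MvPolynomial (Fin n) K) :
    comp w d (f + g) = comp w d f + comp w d g := by
  apply MvPolynomial.ext; intro m
  simp only [MvPolynomial.coeff_add, coeff_comp]
  split <;> simp

lemma DF_ne_zero {f : MvPolynomial (Fin n) K} (hf : f ≠ 0) : DF K n w f ≠ 0 := by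
  obtain ⟨m, hm, hsup⟩ := Finset.exists_mem_eq_sup f.support
    (MvPolynomial.support_nonempty.mpr hf) (degW n w)
  intro h0
  have := coeff_DF w f m
  rw [h0] at this
  simp only [MvPolynomial.coeff_zero] at this
  rw [if_pos hsup.symm] at this
  exact (MvPolynomial.mem_support_iff.mp hm) this.symm

end Basic

section Layer2
variable {K : Type*} [Field K] {n : ℕ} (w : Fin n → ℕ)

lemma comp_zero (d : ℕ) : comp w d (0 : MvPolynomial (Fin n) K) = 0 := by
  apply MvPolynomial.ext; intro m
  rw [coeff_comp]; simp

lemma comp_sum {α : Type*} (d : ℕ) (s : Finset α) (f : α → MvPolynomial (Fin n) K) :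
    comp w d (∑ x ∈ s, f x) = ∑ x ∈ s, comp w d (f x) := by
  classical
  induction s using Finset.induction_on with
  | empty => simp [comp_zero]
  | insert _ _ h ih => rw [Finset.sum_insert h, Finset.sum_insert h, comp_add, ih]

lemma comp_eq_self_of_forall {d : ℕ} {f : MvPolynomial (Fin n) K}
    (h : ∀ m ∈ f.support, degW n w m = d) : comp w d f = f := by
  apply MvPolynomial.ext; intro m
  rw [coeff_comp]
  by_cases hm : m ∈ f.support
  · rw [if_pos (h m hm)]
  · rw [MvPolynomial.notMem_support_iff.mp hm]; split <;> rfl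

lemma comp_eq_zero_of_forall {d : ℕ} {f : MvPolynomial (Fin n) K}
    (h : ∀ m ∈ f.support, degW n w m ≠ d) : comp w d f = 0 := by
  apply MvPolynomial.ext; intro m
  rw [coeff_comp]
  by_cases hm : m ∈ f.support
  · rw [if_neg (h m hm)]; rfl
  · rw [MvPolynomial.notMem_support_iff.mp hm]; split <;> rfl

lemma sum_comp (f : MvPolynomial (Fin n) K) :
    ∑ d ∈ f.support.image (degW n w), comp w d f = f := by
  apply MvPolynomial.ext; intro m
  rw [MvPolynomial.coeff_sum]
  simp only [coeff_comp]
  by_cases hm : m ∈ f.support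
  · rw [Finset.sum_eq_single (degW n w m)]
    · rw [if_pos rfl]
    · intro b _ hb; rw [if_neg (fun hc => hb hc.symm)]
    · intro hmem; exact absurd (Finset.mem_image_of_mem _ hm) hmem
  · rw [MvPolynomial.notMem_support_iff.mp hm]
    apply Finset.sum_eq_zero; intro b _
    split <;> rfl

lemma hom_mul {a b : ℕ} {f g : MvPolynomial (Fin n) K}
    (hf : ∀ m ∈ f.support, degW n w m = a) (hg : ∀ m ∈ g.support, degW n w m = b) :
    ∀ m ∈ (f * g).support, degW n w m = a + b := by
  classical
  intro m hm
  have := MvPolynomial.support_mul f g hm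
  rw [Finset.mem_add] at this
  obtain ⟨x, hx, y, hy, rfl⟩ := this
  rw [degW_add, hf x hx, hg y hy]

lemma supp_DF_degW {f : MvPolynomial (Fin n) K} {m : Fin n →₀ ℕ}
    (hm : m ∈ (DF K n w f).support) : degW n w m = f.support.sup (degW n w) :=
  degW_of_mem_support_comp w hm

lemma supp_sub_DF {f : MvPolynomial (Fin n) K} {m : Fin n →₀ ℕ}
    (hm : m ∈ (f - DF K n w f).support) :
    degW n w m < f.support.sup (degW n w) := by
  rw [MvPolynomial.mem_support_iff, MvPolynomial.coeff_sub, coeff_DF] at hm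
  by_cases h : degW n w m = f.support.sup (degW n w)
  · rw [if_pos h, sub_self] at hm; exact absurd rfl hm
  · rw [if_neg h, sub_zero] at hm
    exact lt_of_le_of_ne (Finset.le_sup (MvPolynomial.mem_support_iff.mpr hm)) h

/-- If all of `f`'s monomials have degree `≤ d` and the degree-`d` component is nonzero,
then `f` has degree `d` and its degree form is that component. -/
lemma DF_of_top {d : ℕ} {f : MvPolynomial (Fin n) K}
    (hle : ∀ m ∈ f.support, degW n w m ≤ d) (hne : comp w d f ≠ 0) :
    f.support.sup (degW n w) = d ∧ DF K n w f = comp w d f := by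
  obtain ⟨m, hm⟩ := MvPolynomial.support_nonempty.mpr hne
  have hmd : degW n w m = d := degW_of_mem_support_comp w hm
  have hms : m ∈ f.support := support_comp_subset w d f hm
  have hsup : f.support.sup (degW n w) = d :=
    le_antisymm (Finset.sup_le hle) (hmd ▸ Finset.le_sup hms)
  exact ⟨hsup, by rw [DF_eq_comp, hsup]⟩

variable {I : Ideal (MvPolynomial (Fin n) K)}

/-- the predicate: `p` is zero or the degree form of a nonzero element of `I` of degree `d` -/
def IsDFd (w : Fin n → ℕ) (I : Ideal (MvPolynomial (Fin n) K)) (d : ℕ)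
    (p : MvPolynomial (Fin n) K) : Prop :=
  p = 0 ∨ ∃ f ∈ I, f ≠ 0 ∧ f.support.sup (degW n w) = d ∧ DF K n w f = p

lemma IsDFd_zero (d : ℕ) : IsDFd w I d 0 := Or.inl rfl

lemma IsDFd_add {d : ℕ} {p q : MvPolynomial (Fin n) K}
    (hp : IsDFd w I d p) (hq : IsDFd w I d q) : IsDFd w I d (p + q) := by
  rcases hp with rfl | ⟨f, hfI, hf0, hfd, rfl⟩
  · rwa [zero_add]
  rcases hq with rfl | ⟨g, hgI, hg0, hgd, rfl⟩
  · rw [add_zero]; exact Or.inr ⟨f, hfI, hf0, hfd, rfl⟩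
  by_cases h0 : DF K n w f + DF K n w g = 0
  · rw [h0]; exact Or.inl rfl
  have hcomp : comp w d (f + g) = DF K n w f + DF K n w g := by
    rw [comp_add, DF_eq_comp, DF_eq_comp, hfd, hgd]
  have hle : ∀ m ∈ (f + g).support, degW n w m ≤ d := by
    intro m hm
    rcases Finset.mem_union.mp (MvPolynomial.support_add hm) with h | h
    · exact hfd ▸ Finset.le_sup h
    · exact hgd ▸ Finset.le_sup h
  have hne : comp w d (f + g) ≠ 0 := by rw [hcomp]; exact h0
  have hfg0 : f + g ≠ 0 := by
    intro h; rw [h, comp_zero] at hne; exact hne rfl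
  obtain ⟨hsup, hDF⟩ := DF_of_top w hle hne
  exact Or.inr ⟨f + g, I.add_mem hfI hgI, hfg0, hsup, by rw [hDF, hcomp]⟩

lemma IsDFd_sum {α : Type*} {d : ℕ} (s : Finset α) (f : α → MvPolynomial (Fin n) K)
    (h : ∀ x ∈ s, IsDFd w I d (f x)) : IsDFd w I d (∑ x ∈ s, f x) :=
  Finset.sum_induction f _ (fun _ _ => IsDFd_add w) (IsDFd_zero w d) h

lemma IsDFd_mul_hom {e c : ℕ} {r p : MvPolynomial (Fin n) K}
    (hr : ∀ m ∈ r.support, degW n w m = e) (hp : IsDFd w I c p) :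
    IsDFd w I (e + c) (r * p) := by
  rcases hp with rfl | ⟨f, hfI, hf0, hfd, rfl⟩
  · rw [mul_zero]; exact IsDFd_zero w _
  by_cases h0 : r * DF K n w f = 0
  · rw [h0]; exact IsDFd_zero w _
  have hr0 : r ≠ 0 := fun h => h0 (by rw [h, zero_mul])
  have hrf0 : r * f ≠ 0 := mul_ne_zero hr0 hf0
  have hDFsupp : ∀ m ∈ (DF K n w f).support, degW n w m = c :=
    fun m hm => hfd ▸ supp_DF_degW w hm
  have hcomp : comp w (e + c) (r * f) = r * DF K n w f := by
    have hsplit : r * f = r * DF K n w f + r * (f - DF K n w f) := by ring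
    rw [hsplit, comp_add, comp_eq_self_of_forall w (hom_mul w hr hDFsupp),
      comp_eq_zero_of_forall w ?_, add_zero]
    intro m hm
    classical
    have := MvPolynomial.support_mul r (f - DF K n w f) hm
    rw [Finset.mem_add] at this
    obtain ⟨x, hx, y, hy, rfl⟩ := this
    rw [degW_add, hr x hx]
    have := supp_sub_DF w hy
    omega
  have hle : ∀ m ∈ (r * f).support, degW n w m ≤ e + c := by
    classical
    intro m hm
    have := MvPolynomial.support_mul r f hm
    rw [Finset.mem_add] at this
    obtain ⟨x, hx, y, hy, rfl⟩ := this
    rw [degW_add, hr x hx]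
    have : degW n w y ≤ c := hfd ▸ Finset.le_sup hy
    omega
  have hne : comp w (e + c) (r * f) ≠ 0 := by rw [hcomp]; exact h0
  obtain ⟨hsup, hDF⟩ := DF_of_top w hle hne
  exact Or.inr ⟨r * f, I.mul_mem_left r hfI, hrf0, hsup, by rw [hDF, hcomp]⟩

end Layer2

section LemmaE
variable {K : Type*} [Field K] {n : ℕ} (w : Fin n → ℕ)
variable {I : Ideal (MvPolynomial (Fin n) K)}

lemma IsDFd_comp_of_mem {q : MvPolynomial (Fin n) K} (hq : q ∈ DFideal K n w I) :
    ∀ d : ℕ, IsDFd w I d (comp w d q) := by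
  induction hq using Submodule.span_induction with
  | mem x hx =>
    intro d
    obtain ⟨f, hfI, hf0, rfl⟩ := hx
    by_cases hd : f.support.sup (degW n w) = d
    · refine Or.inr ⟨f, hfI, hf0, hd, ?_⟩
      rw [comp_eq_self_of_forall w (fun m hm => hd ▸ supp_DF_degW w hm)]
    · have hz : comp w d (DF K n w f) = 0 :=
        comp_eq_zero_of_forall w
          (fun m hm h => hd ((supp_DF_degW w hm).symm.trans h))
      rw [hz]; exact IsDFd_zero w d
  | zero => intro d; rw [comp_zero]; exact IsDFd_zero w d
  | add x y hx hy ihx ihy =>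
    intro d; rw [comp_add]; exact IsDFd_add w (ihx d) (ihy d)
  | smul a x hx ih =>
    intro d
    rw [smul_eq_mul, ← sum_comp w a, Finset.sum_mul, comp_sum]
    refine IsDFd_sum w _ _ (fun e he => ?_)
    rw [← sum_comp w x, Finset.mul_sum, comp_sum]
    refine IsDFd_sum w _ _ (fun c hc => ?_)
    have hre : ∀ m ∈ (comp w e a).support, degW n w m = e :=
      fun m hm => degW_of_mem_support_comp w hm
    have hqc : ∀ m ∈ (comp w c x).support, degW n w m = c :=
      fun m hm => degW_of_mem_support_comp w hm
    have hprod := hom_mul w hre hqc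
    by_cases hd : e + c = d
    · rw [comp_eq_self_of_forall w (fun m hm => (hprod m hm).trans hd)]
      exact hd ▸ IsDFd_mul_hom w hre (ih c)
    · rw [comp_eq_zero_of_forall w (fun m hm => (hprod m hm) ▸ hd)]
      exact IsDFd_zero w d

end LemmaE

section Walk
variable {K : Type*} [Field K] {n : ℕ} (w : Fin n → ℕ)

lemma step_facts {O : Finset (Fin n →₀ ℕ)} {t m : Fin n →₀ ℕ}
    (htO : t ∈ O) (htm : t ≤ m) (hmO : m ∉ O) :
    ∃ t' : Fin n →₀ ℕ, (t' ∉ O → t' ∈ borderSet n O) ∧ t' ≤ m ∧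
      (∑ j, (m - t) j) = (∑ j, (m - t') j) + 1 := by
  have htne : t ≠ m := fun h => hmO (h ▸ htO)
  have : ∃ i, t i < m i := by
    by_contra h
    push_neg at h
    exact htne (le_antisymm htm (Finsupp.le_def.mpr h))
  obtain ⟨i, hi⟩ := this
  refine ⟨t + Finsupp.single i 1, ?_, ?_, ?_⟩
  · intro hnot
    classical
    simp only [borderSet, Finset.mem_sdiff, Finset.mem_biUnion, Finset.mem_image,
      Finset.mem_univ, true_and]
    exact ⟨⟨t, htO, i, rfl⟩, hnot⟩
  · rw [Finsupp.le_def]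
    intro j
    rw [Finsupp.add_apply, Finsupp.single_apply]
    rcases eq_or_ne i j with rfl | hij
    · simpa using hi
    · simp only [if_neg hij, add_zero]
      exact Finsupp.le_def.mp htm j
  · have hkey : m - t = (m - (t + Finsupp.single i 1)) + Finsupp.single i 1 := by
      ext j
      rw [Finsupp.add_apply, Finsupp.tsub_apply, Finsupp.tsub_apply, Finsupp.add_apply]
      simp only [Finsupp.single_apply]
      have := Finsupp.le_def.mp htm j
      split_ifs with hij
      · subst hij; omega
      · omega
    rw [hkey]
    simp only [Finsupp.add_apply, Finset.sum_add_distrib]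
    congr 1
    simp [Finsupp.single_apply]

lemma monomial_split (O : Finset (Fin n →₀ ℕ)) (b m' : Fin n →₀ ℕ) (c : (Fin n →₀ ℕ) → K) :
    monomial (b + m') (1 : K) =
      monomial m' 1 * (monomial b 1 - ∑ t ∈ O, MvPolynomial.C (c t) * monomial t 1)
        + ∑ t ∈ O, c t • monomial (m' + t) (1 : K) := by
  rw [mul_sub, MvPolynomial.monomial_mul, Finset.mul_sum]
  have hterm : ∀ t ∈ O,
      monomial m' (1 : K) * (MvPolynomial.C (c t) * monomial t 1)
        = c t • monomial (m' + t) (1 : K) := by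
    intro t _
    rw [MvPolynomial.smul_eq_C_mul, mul_left_comm, MvPolynomial.monomial_mul, one_mul]
  rw [Finset.sum_congr rfl hterm, sub_add_cancel, one_mul, add_comm m' b]

lemma add_sub_self_right (a b : Fin n →₀ ℕ) : a + b - b = a := by
  ext j; simp [Finsupp.tsub_apply]

/-- every monomial lies in `J + ⟨O⟩_K` provided `J` contains a border prebasis -/
lemma monomial_mem_sup {O : Finset (Fin n →₀ ℕ)} {J : Ideal (MvPolynomial (Fin n) K)}
    (hB : ∀ b ∈ borderSet n O, ∃ c : (Fin n →₀ ℕ) → K,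
        monomial b 1 - ∑ t ∈ O, MvPolynomial.C (c t) * monomial t 1 ∈ J) :
    ∀ k : ℕ, ∀ m : Fin n →₀ ℕ, (∃ t ∈ O, t ≤ m ∧ (∑ j, (m - t) j) ≤ k) →
      monomial m (1 : K) ∈ Submodule.restrictScalars K J ⊔
        Submodule.span K {p : MvPolynomial (Fin n) K | ∃ t ∈ O, p = monomial t 1} := by
  intro k
  induction k using Nat.strong_induction_on with
  | _ k IH =>
  rintro m ⟨t, htO, htm, htot⟩
  by_cases hmO : m ∈ O
  · exact Submodule.mem_sup_right (Submodule.subset_span ⟨m, hmO, rfl⟩)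
  obtain ⟨t', hborder, ht'le, hsum⟩ := step_facts htO htm hmO
  have hlt : (∑ j, (m - t') j) < k := by omega
  by_cases ht'O : t' ∈ O
  · exact IH _ hlt m ⟨t', ht'O, ht'le, le_refl _⟩
  obtain ⟨c, hcJ⟩ := hB t' (hborder ht'O)
  have hmeq : t' + (m - t') = m := add_tsub_cancel_of_le ht'le
  rw [← hmeq, monomial_split O t' (m - t') c]
  apply Submodule.add_mem
  · exact Submodule.mem_sup_left (J.mul_mem_left _ hcJ)
  · apply Submodule.sum_mem
    intro t0 ht0
    apply Submodule.smul_mem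
    exact IH _ hlt (m - t' + t0)
      ⟨t0, ht0, le_add_self, by rw [add_sub_self_right]⟩

/-- bounded-degree representation of monomials modulo `I` using a border basis whose
polynomials have their border monomial of maximal degree -/
lemma monomial_eq_add {O : Finset (Fin n →₀ ℕ)} {I : Ideal (MvPolynomial (Fin n) K)}
    (hB : ∀ b ∈ borderSet n O, ∃ c : (Fin n →₀ ℕ) → K,
        (∀ t ∈ O, c t ≠ 0 → degW n w t ≤ degW n w b) ∧
        monomial b 1 - ∑ t ∈ O, MvPolynomial.C (c t) * monomial t 1 ∈ I) :
    ∀ k : ℕ, ∀ m : Fin n →₀ ℕ, (∃ t ∈ O, t ≤ m ∧ (∑ j, (m - t) j) ≤ k) →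
      ∃ u ∈ I, ∃ v : MvPolynomial (Fin n) K, v.support ⊆ O ∧
        (∀ s ∈ v.support, degW n w s ≤ degW n w m) ∧ monomial m (1 : K) = u + v := by
  intro k
  induction k using Nat.strong_induction_on with
  | _ k IH =>
  rintro m ⟨t, htO, htm, htot⟩
  by_cases hmO : m ∈ O
  · refine ⟨0, I.zero_mem, monomial m 1, ?_, ?_, by rw [zero_add]⟩
    · intro s hs
      simp [MvPolynomial.support_monomial] at hs
      rwa [← hs]
    · intro s hs
      simp [MvPolynomial.support_monomial] at hs
      rw [← hs]
  obtain ⟨t', hborder, ht'le, hsum⟩ := step_facts htO htm hmO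
  have hlt : (∑ j, (m - t') j) < k := by omega
  by_cases ht'O : t' ∈ O
  · exact IH _ hlt m ⟨t', ht'O, ht'le, le_refl _⟩
  obtain ⟨c, hdeg, hcI⟩ := hB t' (hborder ht'O)
  have hmeq : t' + (m - t') = m := add_tsub_cancel_of_le ht'le
  have hchoice : ∀ t0 ∈ O, ∃ u ∈ I, ∃ v : MvPolynomial (Fin n) K, v.support ⊆ O ∧
      (∀ s ∈ v.support, degW n w s ≤ degW n w (m - t' + t0)) ∧
      monomial (m - t' + t0) (1 : K) = u + v := by
    intro t0 ht0
    exact IH _ hlt (m - t' + t0)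
      ⟨t0, ht0, le_add_self, by rw [add_sub_self_right]⟩
  choose u hu v hvO hvdeg hveq using hchoice
  classical
  refine ⟨monomial (m - t') 1 * (monomial t' 1 - ∑ s ∈ O, MvPolynomial.C (c s) * monomial s 1)
      + ∑ t0 ∈ O.attach, c t0 • u t0 t0.2,
    ?_, ∑ t0 ∈ O.attach, c t0 • v t0 t0.2, ?_, ?_, ?_⟩
  · refine I.add_mem (I.mul_mem_left _ hcI) (Submodule.sum_mem _ (fun t0 _ => ?_))
    rw [MvPolynomial.smul_eq_C_mul]
    exact I.mul_mem_left _ (hu t0 t0.2)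
  · intro s hs
    have := MvPolynomial.support_sum hs
    rw [Finset.mem_biUnion] at this
    obtain ⟨t0, _, hst0⟩ := this
    exact hvO t0 t0.2 (MvPolynomial.support_smul hst0)
  · intro s hs
    have := MvPolynomial.support_sum hs
    rw [Finset.mem_biUnion] at this
    obtain ⟨t0, _, hst0⟩ := this
    have hct0 : c t0 ≠ 0 := by
      intro h0
      rw [h0, zero_smul, MvPolynomial.support_zero] at hst0
      exact absurd hst0 (Finset.notMem_empty s)
    have hs' : s ∈ (v t0 t0.2).support := MvPolynomial.support_smul hst0
    calc degW n w s ≤ degW n w (m - t' + (t0 : Fin n →₀ ℕ)) := hvdeg t0 t0.2 s hs'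
      _ = degW n w (m - t') + degW n w (t0 : Fin n →₀ ℕ) := degW_add w _ _
      _ ≤ degW n w (m - t') + degW n w t' := by
          have := hdeg t0 t0.2 hct0
          omega
      _ = degW n w m := by rw [← degW_add w, add_comm, hmeq]
  · have hS : ∑ s ∈ O, c s • monomial (m - t' + s) (1 : K)
        = (∑ t0 ∈ O.attach, c t0 • u t0 t0.2) + ∑ t0 ∈ O.attach, c t0 • v t0 t0.2 := by
      calc ∑ s ∈ O, c s • monomial (m - t' + s) (1 : K)
        = ∑ t0 ∈ O.attach, c t0 • monomial (m - t' + (t0 : Fin n →₀ ℕ)) (1 : K) :=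
          (Finset.sum_attach O (fun s => c s • monomial (m - t' + s) (1 : K))).symm
      _ = ∑ t0 ∈ O.attach, (c t0 • u t0 t0.2 + c t0 • v t0 t0.2) :=
          Finset.sum_congr rfl (fun x _ => by rw [hveq x x.2, smul_add])
      _ = _ := Finset.sum_add_distrib
    have h2 : t' + (m - t') - t' = m - t' := by
      ext j
      rw [Finsupp.tsub_apply, Finsupp.add_apply]
      omega
    rw [← hmeq, monomial_split O t' (m - t') c, hS, add_assoc, h2]

end Walk
section Main
variable {K : Type*} [Field K] {n : ℕ} (w : Fin n → ℕ)

lemma coeff_prebasis (O : Finset (Fin n →₀ ℕ)) (b : Fin n →₀ ℕ) (c : (Fin n →₀ ℕ) → K)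
    (s : Fin n →₀ ℕ) :
    coeff s (monomial b 1 - ∑ t ∈ O, MvPolynomial.C (c t) * monomial t 1)
      = (if s = b then 1 else 0) - (if s ∈ O then c s else 0) := by
  classical
  rw [MvPolynomial.coeff_sub, MvPolynomial.coeff_sum]
  congr 1
  · rw [MvPolynomial.coeff_monomial]
    by_cases h : s = b
    · rw [if_pos h, if_pos h.symm]
    · rw [if_neg h, if_neg (fun hc => h hc.symm)]
  · simp only [MvPolynomial.coeff_C_mul, MvPolynomial.coeff_monomial, mul_ite, mul_one, mul_zero]
    rw [Finset.sum_ite_eq' O s (fun t => c t)]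

lemma mem_V_of_supp_subset {O : Finset (Fin n →₀ ℕ)} {v : MvPolynomial (Fin n) K}
    (h : v.support ⊆ O) :
    v ∈ Submodule.span K {p : MvPolynomial (Fin n) K | ∃ t ∈ O, p = monomial t 1} := by
  rw [← MvPolynomial.support_sum_monomial_coeff v]
  apply Submodule.sum_mem
  intro m hm
  have he : monomial m (coeff m v) = coeff m v • monomial m (1 : K) := by
    rw [MvPolynomial.smul_monomial, smul_eq_mul, mul_one]
  rw [he]
  exact Submodule.smul_mem _ _ (Submodule.subset_span ⟨m, h hm, rfl⟩)

lemma supp_subset_of_mem_V {O : Finset (Fin n →₀ ℕ)} {v : MvPolynomial (Fin n) K}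
    (hv : v ∈ Submodule.span K {p : MvPolynomial (Fin n) K | ∃ t ∈ O, p = monomial t 1}) :
    v.support ⊆ O := by
  induction hv using Submodule.span_induction with
  | mem x hx =>
    obtain ⟨t, ht, rfl⟩ := hx
    intro s hs
    simp [MvPolynomial.support_monomial] at hs
    rwa [← hs]
  | zero => simp
  | add x y hx hy ihx ihy =>
    exact fun s hs => by
      rcases Finset.mem_union.mp (MvPolynomial.support_add hs) with h | h
      · exact ihx h
      · exact ihy h
  | smul a x hx ih => exact fun s hs => ih (MvPolynomial.support_smul hs)

lemma DF_one : DF K n w (1 : MvPolynomial (Fin n) K) = 1 := by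
  apply comp_eq_self_of_forall
  intro m hm
  have hm0 : m = 0 := by
    rw [MvPolynomial.mem_support_iff, MvPolynomial.coeff_one] at hm
    by_contra h
    exact hm (if_neg (fun hc => h hc.symm))
  have hsup : (1 : MvPolynomial (Fin n) K).support.sup (degW n w) = 0 := by
    apply Nat.le_antisymm _ (Nat.zero_le _)
    apply Finset.sup_le
    intro s hs
    have hs0 : s = 0 := by
      rw [MvPolynomial.mem_support_iff, MvPolynomial.coeff_one] at hs
      by_contra h
      exact hs (if_neg (fun hc => h hc.symm))
    subst hs0
    simp [degW]
  rw [hsup, hm0]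
  simp [degW]

end Main
/-- If `I` has an `O`-border basis `G` with `b_j ∈ Supp(DF_W(g_j))` for all `j`, then the degree
form ideal `DF_W(I)` has the `O`-border basis `DF_W(G)`. -/
theorem degreeForm_borderBasis (K : Type*) [Field K] (n : ℕ)
    (w : Fin n → ℕ) (hw : ∀ i, 0 < w i)
    (O : Finset (Fin n →₀ ℕ)) (hO : ∀ t ∈ O, ∀ s : Fin n →₀ ℕ, s ≤ t → s ∈ O)
    (I : Ideal (MvPolynomial (Fin n) K))
    (g : (Fin n →₀ ℕ) → MvPolynomial (Fin n) K)
    (hg : IsBorderBasis K n O I g)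
    (hsupp : ∀ b ∈ borderSet n O, b ∈ (DF K n w (g b)).support) :
    IsBorderBasis K n O (DFideal K n w I) (fun b => DF K n w (g b)) := by
  obtain ⟨hg1, hg2⟩ := hg
  have key : ∀ b ∈ borderSet n O,
      (DF K n w (g b) ∈ DFideal K n w I) ∧
      ∃ c : (Fin n →₀ ℕ) → K,
        (∀ t ∈ O, c t ≠ 0 → degW n w t ≤ degW n w b) ∧
        g b = monomial b 1 - ∑ t ∈ O, MvPolynomial.C (c t) * monomial t 1 ∧
        DF K n w (g b)
          = monomial b 1 - ∑ t ∈ O, MvPolynomial.C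
              (if degW n w t = degW n w b then c t else 0) * monomial t 1 := by
    intro b hb
    obtain ⟨hGI, c, hGeq⟩ := hg1 b hb
    have hbO : b ∉ O := by
      classical
      simp only [borderSet, Finset.mem_sdiff] at hb
      exact hb.2
    have hcoeff : ∀ s, coeff s (g b)
        = (if s = b then 1 else 0) - (if s ∈ O then c s else 0) := by
      intro s; rw [hGeq]; exact coeff_prebasis O b c s
    have hGb : coeff b (g b) = 1 := by
      rw [hcoeff b, if_pos rfl, if_neg hbO, sub_zero]
    have hG0 : g b ≠ 0 := fun h => one_ne_zero (by rw [← hGb, h, MvPolynomial.coeff_zero])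
    have hdegb : (g b).support.sup (degW n w) = degW n w b :=
      (supp_DF_degW w (hsupp b hb)).symm
    have hbound : ∀ t ∈ O, c t ≠ 0 → degW n w t ≤ degW n w b := by
      intro t ht hct
      have htb : t ≠ b := fun h => hbO (h ▸ ht)
      have hct' : coeff t (g b) ≠ 0 := by
        rw [hcoeff t, if_neg htb, if_pos ht, zero_sub]
        exact neg_ne_zero.mpr hct
      exact hdegb ▸ Finset.le_sup (MvPolynomial.mem_support_iff.mpr hct')
    refine ⟨Ideal.subset_span ⟨g b, hGI, hG0, rfl⟩, c, hbound, hGeq, ?_⟩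
    apply MvPolynomial.ext
    intro s
    rw [coeff_DF, hdegb, coeff_prebasis]
    by_cases hsb : s = b
    · subst hsb
      simp [hGb, hbO]
    · by_cases hs : degW n w s = degW n w b
      · by_cases hsO : s ∈ O
        · simp [hs, hsb, hsO, hcoeff s]
        · simp [hs, hsb, hsO, hcoeff s]
      · by_cases hsO : s ∈ O
        · simp [hs, hsb, hsO]
        · simp [hs, hsb, hsO]
  constructor
  · intro b hb
    obtain ⟨hDFJ, c, hbound, hGeq, hDFeq⟩ := key b hb
    exact ⟨hDFJ, _, hDFeq⟩
  · by_cases hOem : O = ∅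
    · subst hOem
      have hset : {p : MvPolynomial (Fin n) K
          | ∃ t ∈ (∅ : Finset (Fin n →₀ ℕ)), p = monomial t 1} = (∅ : Set _) := by simp
      rw [hset, Submodule.span_empty] at hg2 ⊢
      have hItop : Submodule.restrictScalars K I = ⊤ := by
        have hc := hg2.codisjoint
        rwa [codisjoint_bot] at hc
      have h1I : (1 : MvPolynomial (Fin n) K) ∈ I := by
        have h1 : (1 : MvPolynomial (Fin n) K) ∈ Submodule.restrictScalars K I :=
          hItop ▸ Submodule.mem_top
        exact h1
      have hJtop : DFideal K n w I = ⊤ := by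
        rw [Ideal.eq_top_iff_one]
        exact Ideal.subset_span ⟨1, h1I, one_ne_zero, (DF_one w).symm⟩
      have hres : Submodule.restrictScalars K (DFideal K n w I) = ⊤ := by
        rw [hJtop]; rfl
      rw [hres]
      exact isCompl_top_bot
    · obtain ⟨t0, ht0⟩ := Finset.nonempty_iff_ne_empty.mpr hOem
      have h0O : (0 : Fin n →₀ ℕ) ∈ O := hO t0 ht0 0 (zero_le (a := t0))
      constructor
      · -- Disjointness
        rw [Submodule.disjoint_def]
        intro q hqJ hqV
        by_contra hq0
        have hqJ' : q ∈ DFideal K n w I := hqJ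
        have hsub : q.support ⊆ O := supp_subset_of_mem_V hqV
        set d := q.support.sup (degW n w) with hd
        have hp0 : DF K n w q ≠ 0 := DF_ne_zero w hq0
        have hDFq : DF K n w q = comp w d q := by rw [hd]; exact DF_eq_comp w q
        rcases IsDFd_comp_of_mem w hqJ' d with hzero | ⟨f, hfI, hf0, hfd, hDFf⟩
        · exact hp0 (by rw [hDFq, hzero])
        have hcq : comp w d q ≠ 0 := fun h => hp0 (by rw [hDFq, h])
        have hDFfne : DF K n w f ≠ 0 := by rw [hDFf]; exact hcq
        have hDFfO : (DF K n w f).support ⊆ O := by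
          rw [hDFf]
          exact fun s hs => hsub (support_comp_subset w d q hs)
        set r := f - DF K n w f with hr
        have hrdeg : ∀ m ∈ r.support, degW n w m < d := by
          intro m hm
          have hlt := supp_sub_DF w (f := f) (m := m) (by rw [← hr]; exact hm)
          rwa [hfd] at hlt
        have hchoice : ∀ m ∈ r.support, ∃ u ∈ I, ∃ v : MvPolynomial (Fin n) K,
            v.support ⊆ O ∧ (∀ s ∈ v.support, degW n w s ≤ degW n w m) ∧
            monomial m (1 : K) = u + v := by
          intro m _
          refine monomial_eq_add w ?_ (∑ j, m j) m ⟨0, h0O, zero_le (a := m), by rw [tsub_zero]⟩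
          intro b hb
          obtain ⟨hDFJ, c, hbound, hGeq, hDFeq⟩ := key b hb
          exact ⟨c, hbound, by rw [← hGeq]; exact (hg1 b hb).1⟩
        choose u hu v hvO hvdeg hveq using hchoice
        classical
        set Sv := ∑ m ∈ r.support.attach,
          MvPolynomial.C (coeff (m : Fin n →₀ ℕ) r) * v m m.2 with hSv
        set Su := ∑ m ∈ r.support.attach,
          MvPolynomial.C (coeff (m : Fin n →₀ ℕ) r) * u m m.2 with hSu
        have hrsum : r = Su + Sv := by
          conv_lhs => rw [← MvPolynomial.support_sum_monomial_coeff r,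
            ← Finset.sum_attach r.support (fun m => monomial m (coeff m r))]
          rw [hSu, hSv, ← Finset.sum_add_distrib]
          apply Finset.sum_congr rfl
          intro x _
          rw [← mul_add, ← hveq x x.2, MvPolynomial.C_mul_monomial, mul_one]
        set hpoly := DF K n w f + Sv with hhp
        have hhI : hpoly ∈ I := by
          have heq : hpoly = f - Su := by
            rw [hhp]
            have hrs := hrsum
            rw [hr] at hrs
            linear_combination -hrs
          rw [heq]
          exact I.sub_mem hfI
            (Submodule.sum_mem _ (fun m _ => I.mul_mem_left _ (hu m m.2)))
        have hhV : hpoly ∈ Submodule.span K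
            {p : MvPolynomial (Fin n) K | ∃ t ∈ O, p = monomial t 1} := by
          apply mem_V_of_supp_subset
          intro s hs
          rw [hhp] at hs
          rcases Finset.mem_union.mp (MvPolynomial.support_add hs) with h1 | h1
          · exact hDFfO h1
          · have h2 := MvPolynomial.support_sum h1
            rw [Finset.mem_biUnion] at h2
            obtain ⟨m, _, hm⟩ := h2
            have : s ∈ (v m m.2).support := by
              rw [← MvPolynomial.smul_eq_C_mul] at hm
              exact MvPolynomial.support_smul hm
            exact hvO m m.2 this
        have hh0 : hpoly = 0 :=
          Submodule.disjoint_def.mp hg2.disjoint hpoly hhI hhV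
        obtain ⟨m0, hm0⟩ := MvPolynomial.support_nonempty.mpr hDFfne
        have hm0d : degW n w m0 = d := by
          have h3 := supp_DF_degW w hm0
          rwa [hfd] at h3
        have hm0Sv : coeff m0 Sv = 0 := by
          by_contra hc
          have hmem : m0 ∈ Sv.support := MvPolynomial.mem_support_iff.mpr hc
          rw [hSv] at hmem
          have h2 := MvPolynomial.support_sum hmem
          rw [Finset.mem_biUnion] at h2
          obtain ⟨m, _, hm⟩ := h2
          have hmv : m0 ∈ (v m m.2).support := by
            rw [← MvPolynomial.smul_eq_C_mul] at hm
            exact MvPolynomial.support_smul hm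
          have : degW n w m0 ≤ degW n w (m : Fin n →₀ ℕ) := hvdeg m m.2 m0 hmv
          have : degW n w m0 < d := lt_of_le_of_lt this (hrdeg m m.2)
          omega
        have hcoeffh : coeff m0 hpoly = coeff m0 (DF K n w f) := by
          rw [hhp, MvPolynomial.coeff_add, hm0Sv, add_zero]
        rw [hh0, MvPolynomial.coeff_zero] at hcoeffh
        exact (MvPolynomial.mem_support_iff.mp hm0) hcoeffh.symm
      · -- Codisjointness
        rw [codisjoint_iff, Submodule.eq_top_iff']
        intro p
        rw [← MvPolynomial.support_sum_monomial_coeff p]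
        apply Submodule.sum_mem
        intro m _
        have he : monomial m (coeff m p) = coeff m p • monomial m (1 : K) := by
          rw [MvPolynomial.smul_monomial, smul_eq_mul, mul_one]
        rw [he]
        apply Submodule.smul_mem
        refine monomial_mem_sup ?_ (∑ j, m j) m ⟨0, h0O, zero_le (a := m), by rw [tsub_zero]⟩
        intro b hb
        obtain ⟨hDFJ, c, hbound, hGeq, hDFeq⟩ := key b hb
        exact ⟨_, hDFeq ▸ hDFJ⟩
end

section
/- Let W be a row of positive weights and O an order ideal such that the degree form ideal DF_W(I) of a zero-dimensional ideal I has an O-border basis. Then I itself has an O-border basis G = {g_1,…,g_ν}, and moreover b_j ∈ Supp(DF_W(g_j)) for each j. -/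
open MvPolynomial Finsupp

namespace BBaux

noncomputable def comp (K : Type*) [Field K] (n : ℕ) (w : Fin n → ℕ)
    (d : ℕ) (f : MvPolynomial (Fin n) K) : MvPolynomial (Fin n) K :=
  ∑ m ∈ f.support.filter (fun m => degW n w m = d), monomial m (coeff m f)

variable {K : Type*} [Field K] {n : ℕ} {w : Fin n → ℕ}

lemma DF_eq_comp (f : MvPolynomial (Fin n) K) :
    DF K n w f = comp K n w (f.support.sup (degW n w)) f := rfl

lemma degW_add (a b : Fin n →₀ ℕ) : degW n w (a + b) = degW n w a + degW n w b := by
  simp [degW, Finsupp.add_apply, mul_add, Finset.sum_add_distrib]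

lemma coeff_comp (d : ℕ) (f : MvPolynomial (Fin n) K) (k : Fin n →₀ ℕ) :
    coeff k (comp K n w d f) = if degW n w k = d then coeff k f else 0 := by
  rw [comp, coeff_sum]
  simp only [coeff_monomial]
  rw [Finset.sum_ite_eq']
  by_cases h1 : degW n w k = d
  · rw [if_pos h1]
    by_cases hk : k ∈ f.support
    · rw [if_pos (Finset.mem_filter.2 ⟨hk, h1⟩)]
    · rw [if_neg (fun hc => hk (Finset.mem_filter.1 hc).1)]
      exact (MvPolynomial.notMem_support_iff.1 hk).symm
  · rw [if_neg h1, if_neg (show k ∉ Finset.filter (fun m => degW n w m = d) f.support from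
      fun hc => h1 (Finset.mem_filter.1 hc).2)]

lemma mem_support_comp {d : ℕ} {f : MvPolynomial (Fin n) K} {k : Fin n →₀ ℕ}
    (h : k ∈ (comp K n w d f).support) : k ∈ f.support ∧ degW n w k = d := by
  rw [MvPolynomial.mem_support_iff, coeff_comp] at h
  split_ifs at h with h1
  · exact ⟨MvPolynomial.mem_support_iff.2 h, h1⟩
  · exact absurd rfl h

lemma comp_eq_self {d : ℕ} {f : MvPolynomial (Fin n) K}
    (h : ∀ k ∈ f.support, degW n w k = d) : comp K n w d f = f := by
  ext k
  rw [coeff_comp]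
  split_ifs with h1
  · rfl
  · by_contra hc
    exact h1 (h k (MvPolynomial.mem_support_iff.2 fun h0 => hc h0.symm))

lemma comp_add (d : ℕ) (f g : MvPolynomial (Fin n) K) :
    comp K n w d (f + g) = comp K n w d f + comp K n w d g := by
  ext k
  simp only [coeff_add, coeff_comp]
  split_ifs <;> simp

lemma comp_zero (d : ℕ) : comp K n w d (0 : MvPolynomial (Fin n) K) = 0 := by
  ext k; simp [coeff_comp]

lemma comp_sum {ι : Type*} (d : ℕ) (s : Finset ι) (F : ι → MvPolynomial (Fin n) K) :
    comp K n w d (∑ i ∈ s, F i) = ∑ i ∈ s, comp K n w d (F i) := by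
  classical
  induction s using Finset.induction_on with
  | empty => simp [comp_zero]
  | insert _ _ h ih => rw [Finset.sum_insert h, Finset.sum_insert h, comp_add, ih]

lemma exists_degW_of_comp_ne_zero {d : ℕ} {f : MvPolynomial (Fin n) K}
    (h : comp K n w d f ≠ 0) : ∃ k ∈ f.support, degW n w k = d := by
  obtain ⟨k, hk⟩ := MvPolynomial.support_nonempty.2 h
  exact ⟨k, (mem_support_comp hk).1, (mem_support_comp hk).2⟩

lemma comp_eq_DF {d : ℕ} {f : MvPolynomial (Fin n) K}
    (hle : ∀ k ∈ f.support, degW n w k ≤ d) (hne : comp K n w d f ≠ 0) :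
    f ≠ 0 ∧ f.support.sup (degW n w) = d ∧ DF K n w f = comp K n w d f := by
  obtain ⟨k, hk, hdk⟩ := exists_degW_of_comp_ne_zero hne
  have h0 : f ≠ 0 := fun h => by simp [h] at hk
  have hsup : f.support.sup (degW n w) = d :=
    le_antisymm (Finset.sup_le hle) (hdk ▸ Finset.le_sup hk)
  exact ⟨h0, hsup, by rw [DF_eq_comp, hsup]⟩

lemma DF_ne_zero {f : MvPolynomial (Fin n) K} (h : f ≠ 0) : DF K n w f ≠ 0 := by
  obtain ⟨k, hk, hsup⟩ := Finset.exists_mem_eq_sup f.support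
    (MvPolynomial.support_nonempty.2 h) (degW n w)
  have : coeff k (DF K n w f) ≠ 0 := by
    rw [DF_eq_comp, coeff_comp, if_pos hsup.symm]
    exact MvPolynomial.mem_support_iff.1 hk
  exact fun h0 => this (by rw [h0, coeff_zero])

lemma support_DF_subset {f : MvPolynomial (Fin n) K} :
    (DF K n w f).support ⊆ f.support := fun k hk =>
  (mem_support_comp (DF_eq_comp f ▸ hk)).1

lemma DF_eq_comp_of_sup {d : ℕ} {f : MvPolynomial (Fin n) K}
    (h : f.support.sup (degW n w) = d) : DF K n w f = comp K n w d f := by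
  rw [DF_eq_comp, h]

lemma comp_comp (d e : ℕ) (f : MvPolynomial (Fin n) K) :
    comp K n w d (comp K n w e f) = if d = e then comp K n w e f else 0 := by
  by_cases hd : d = e
  · subst hd
    rw [if_pos rfl]
    ext k
    simp only [coeff_comp]
    split_ifs <;> simp
  · rw [if_neg hd]
    ext k
    simp only [coeff_comp, coeff_zero]
    split_ifs with h1 h2
    · exact absurd (h1.symm.trans h2) hd
    · rfl
    · rfl

lemma comp_monomial_mul (d : ℕ) (m : Fin n →₀ ℕ) (c : K) (f : MvPolynomial (Fin n) K) :
    comp K n w d (monomial m c * f) =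
      if degW n w m ≤ d then monomial m c * comp K n w (d - degW n w m) f else 0 := by
  ext k
  by_cases hmk : m ≤ k
  · have hk : degW n w k = degW n w (k - m) + degW n w m := by
      conv_lhs => rw [← tsub_add_cancel_of_le hmk]
      rw [degW_add]
    rw [coeff_comp, coeff_monomial_mul', if_pos hmk]
    by_cases h2 : degW n w m ≤ d
    · rw [if_pos h2, coeff_monomial_mul', if_pos hmk, coeff_comp]
      by_cases h1 : degW n w k = d
      · rw [if_pos h1, if_pos (by omega)]
      · rw [if_neg h1, if_neg (by omega), mul_zero]
    · rw [if_neg h2, coeff_zero, if_neg (show ¬degW n w k = d by omega)]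
  · rw [coeff_comp, coeff_monomial_mul', if_neg hmk, ite_self]
    split_ifs with h2
    · rw [coeff_monomial_mul', if_neg hmk]
    · rw [coeff_zero]

lemma claim (I : Ideal (MvPolynomial (Fin n) K)) {p : MvPolynomial (Fin n) K}
    (hp : p ∈ DFideal K n w I) :
    ∀ d : ℕ, comp K n w d p = 0 ∨ ∃ f ∈ I, f ≠ 0 ∧ f.support.sup (degW n w) = d ∧
      DF K n w f = comp K n w d p := by
  classical
  refine Submodule.span_induction ?_ ?_ ?_ ?_ hp
  · rintro q ⟨f, hfI, hf0, rfl⟩ d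
    by_cases hd : d = f.support.sup (degW n w)
    · subst hd
      right
      refine ⟨f, hfI, hf0, rfl, ?_⟩
      rw [DF_eq_comp, comp_comp, if_pos rfl]
    · left
      rw [DF_eq_comp, comp_comp, if_neg hd]
  · intro d
    left
    exact comp_zero d
  · intro x y _ _ ihx ihy d
    have hxy : comp K n w d (x + y) = comp K n w d x + comp K n w d y := comp_add d x y
    rcases ihx d with h1 | ⟨f, hfI, hf0, hfsup, hfDF⟩
    · rcases ihy d with h2 | ⟨f', hfI', hf0', hfsup', hfDF'⟩
      · left
        rw [hxy, h1, h2, add_zero]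
      · right
        exact ⟨f', hfI', hf0', hfsup', by rw [hxy, h1, zero_add, hfDF']⟩
    · rcases ihy d with h2 | ⟨f', hfI', hf0', hfsup', hfDF'⟩
      · right
        exact ⟨f, hfI, hf0, hfsup, by rw [hxy, h2, add_zero, hfDF]⟩
      · have hF : comp K n w d (f + f') = comp K n w d (x + y) := by
          rw [hxy, comp_add, ← DF_eq_comp_of_sup hfsup, ← DF_eq_comp_of_sup hfsup', hfDF, hfDF']
        by_cases h0 : comp K n w d (x + y) = 0
        · left; exact h0
        · right
          have hle : ∀ k ∈ (f + f').support, degW n w k ≤ d := by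
            intro k hk
            rcases Finset.mem_union.1 (MvPolynomial.support_add hk) with h | h
            · exact hfsup ▸ Finset.le_sup h
            · exact hfsup' ▸ Finset.le_sup h
          obtain ⟨ha, hb, hc⟩ := comp_eq_DF hle (by rw [hF]; exact h0)
          exact ⟨f + f', Submodule.add_mem _ hfI hfI', ha, hb, hc.trans hF⟩
  · intro r x hx ih d
    rw [smul_eq_mul]
    have key : ∀ m : Fin n →₀ ℕ, ∃ fm, fm ∈ I ∧
        comp K n w d (monomial m (coeff m r) * x) =
          comp K n w d (monomial m (coeff m r) * fm) ∧
        ∀ k ∈ (monomial m (coeff m r) * fm).support, degW n w k ≤ d := by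
      intro m
      by_cases h2 : degW n w m ≤ d
      · rcases ih (d - degW n w m) with h | ⟨fm, hfmI, _, hsup, hDFfm⟩
        · refine ⟨0, I.zero_mem, ?_, by simp⟩
          rw [comp_monomial_mul, if_pos h2, h, mul_zero, comp_zero]
        · refine ⟨fm, hfmI, ?_, ?_⟩
          · rw [comp_monomial_mul, if_pos h2, comp_monomial_mul, if_pos h2,
              ← DF_eq_comp_of_sup hsup, hDFfm]
          · intro k hk
            obtain ⟨a, ha, b, hb, hab⟩ := Finset.mem_add.1 (MvPolynomial.support_mul _ _ hk)
            have ham : a = m := by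
              have := MvPolynomial.support_monomial_subset (s := m) (a := coeff m r) ha
              simpa using this
            have hbb : degW n w b ≤ d - degW n w m := hsup ▸ Finset.le_sup hb
            rw [← hab, ham, degW_add]
            omega
      · refine ⟨0, I.zero_mem, ?_, by simp⟩
        rw [comp_monomial_mul, if_neg h2, mul_zero, comp_zero]
    choose fm hfmI hfmcomp hfmsupp using key
    set F := ∑ m ∈ r.support, monomial m (coeff m r) * fm m with hFdef
    have hFI : F ∈ I := Submodule.sum_mem _ fun m _ => Ideal.mul_mem_left _ _ (hfmI m)
    have hcomp : comp K n w d (r * x) = comp K n w d F := by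
      conv_lhs => rw [show r * x = ∑ m ∈ r.support, monomial m (coeff m r) * x by
        rw [← Finset.sum_mul, MvPolynomial.support_sum_monomial_coeff]]
      rw [comp_sum, hFdef, comp_sum]
      exact Finset.sum_congr rfl fun m _ => hfmcomp m
    by_cases h0 : comp K n w d (r * x) = 0
    · left; exact h0
    · right
      have hle : ∀ k ∈ F.support, degW n w k ≤ d := by
        intro k hk
        obtain ⟨m, _, hk2⟩ := Finset.mem_biUnion.1 (MvPolynomial.support_sum hk)
        exact hfmsupp m k hk2
      obtain ⟨ha, hb, hc⟩ := comp_eq_DF hle (by rw [← hcomp]; exact h0)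
      exact ⟨F, hFI, ha, hb, hc.trans hcomp.symm⟩

lemma mem_spanO_iff (O : Finset (Fin n →₀ ℕ)) (p : MvPolynomial (Fin n) K) :
    p ∈ Submodule.span K {q : MvPolynomial (Fin n) K | ∃ t ∈ O, q = monomial t 1} ↔
      p.support ⊆ O := by
  classical
  constructor
  · intro hp
    refine Submodule.span_induction ?_ ?_ ?_ ?_ hp
    · rintro q ⟨t, ht, rfl⟩ k hk
      have : k = t := by simpa [MvPolynomial.support_monomial] using hk
      exact this ▸ ht
    · simp
    · intro a b _ _ ha hb k hk
      rcases Finset.mem_union.1 (MvPolynomial.support_add hk) with h | h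
      · exact ha h
      · exact hb h
    · intro c a _ ha k hk
      exact ha (MvPolynomial.support_smul hk)
  · intro hsupp
    rw [show p = ∑ m ∈ p.support, monomial m (coeff m p) from
      (MvPolynomial.support_sum_monomial_coeff p).symm]
    refine Submodule.sum_mem _ fun m hm => ?_
    have hmono : monomial m (coeff m p) = (coeff m p) • monomial m (1 : K) := by
      rw [MvPolynomial.smul_monomial, smul_eq_mul, mul_one]
    rw [hmono]
    exact Submodule.smul_mem _ _ (Submodule.subset_span ⟨m, hsupp hm, rfl⟩)

end BBaux

/-- If the degree form ideal `DF_W(I)` of a zero-dimensional ideal `I` has an `O`-border basis,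
then `I` has an `O`-border basis `G = {g_1,…,g_ν}` with `b_j ∈ Supp(DF_W(g_j))` for each `j`. -/
theorem borderBasis_of_degreeForm_borderBasis (K : Type*) [Field K] (n : ℕ)
    (w : Fin n → ℕ) (hw : ∀ i, 0 < w i)
    (O : Finset (Fin n →₀ ℕ)) (hO : ∀ t ∈ O, ∀ s : Fin n →₀ ℕ, s ≤ t → s ∈ O)
    (I : Ideal (MvPolynomial (Fin n) K))
    (hfin : Module.Finite K (MvPolynomial (Fin n) K ⧸ I))
    (hDF : ∃ h : (Fin n →₀ ℕ) → MvPolynomial (Fin n) K,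
      IsBorderBasis K n O (DFideal K n w I) h) :
    ∃ g : (Fin n →₀ ℕ) → MvPolynomial (Fin n) K,
      IsBorderBasis K n O I g ∧
      ∀ b ∈ borderSet n O, b ∈ (DF K n w (g b)).support := by
  classical
  obtain ⟨hfn, hcompl⟩ := hDF.choose_spec
  clear hfn
  set V : Submodule K (MvPolynomial (Fin n) K) :=
    Submodule.span K {p : MvPolynomial (Fin n) K | ∃ t ∈ O, p = monomial t 1} with hV
  have hVsupp : ∀ {v : MvPolynomial (Fin n) K}, v ∈ V → v.support ⊆ O :=
    fun {v} hv => (BBaux.mem_spanO_iff O v).1 hv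
  have hVmem : ∀ {v : MvPolynomial (Fin n) K}, v.support ⊆ O → v ∈ V :=
    fun {v} hv => (BBaux.mem_spanO_iff O v).2 hv
  have hDFmem : ∀ f ∈ I, f ≠ 0 → DF K n w f ∈ DFideal K n w I :=
    fun f hf h0 => Ideal.subset_span ⟨f, hf, h0, rfl⟩
  have hdisj : Disjoint (Submodule.restrictScalars K I) V := by
    rw [Submodule.disjoint_def]
    intro f hfI hfV
    by_contra h0
    have h1 : DF K n w f ∈ Submodule.restrictScalars K (DFideal K n w I) :=
      (Submodule.restrictScalars_mem K _ _).2
        (hDFmem f ((Submodule.restrictScalars_mem K _ _).1 hfI) h0)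
    have h2 : DF K n w f ∈ V := hVmem (subset_trans BBaux.support_DF_subset (hVsupp hfV))
    exact BBaux.DF_ne_zero h0 (Submodule.disjoint_def.1 hcompl.disjoint _ h1 h2)
  have hcod : ∀ d : ℕ, ∀ f : MvPolynomial (Fin n) K, f.support.sup (degW n w) ≤ d →
      f ∈ Submodule.restrictScalars K I ⊔ V := by
    intro d
    induction d using Nat.strong_induction_on with
    | _ d IH =>
    intro f hfd
    by_cases h0 : f = 0
    · rw [h0]; exact Submodule.zero_mem _
    have hmemtop : BBaux.comp K n w (f.support.sup (degW n w)) f ∈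
        Submodule.restrictScalars K (DFideal K n w I) ⊔ V := by
      rw [hcompl.sup_eq_top]; trivial
    obtain ⟨p, hp, v, hv, hpv⟩ := Submodule.mem_sup.1 hmemtop
    have hdecomp : BBaux.comp K n w (f.support.sup (degW n w)) f =
        BBaux.comp K n w (f.support.sup (degW n w)) p +
        BBaux.comp K n w (f.support.sup (degW n w)) v := by
      conv_lhs => rw [show BBaux.comp K n w (f.support.sup (degW n w)) f =
        BBaux.comp K n w (f.support.sup (degW n w))
          (BBaux.comp K n w (f.support.sup (degW n w)) f) by
        rw [BBaux.comp_comp, if_pos rfl]]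
      rw [← hpv, BBaux.comp_add]
    obtain ⟨h, hhI, hhe, hhle⟩ : ∃ h, h ∈ I ∧
        BBaux.comp K n w (f.support.sup (degW n w)) h =
          BBaux.comp K n w (f.support.sup (degW n w)) p ∧
        ∀ k ∈ h.support, degW n w k ≤ f.support.sup (degW n w) := by
      rcases BBaux.claim I ((Submodule.restrictScalars_mem K _ _).1 hp)
          (f.support.sup (degW n w)) with hc0 | ⟨h, hhI, _, hhsup, hhDF⟩
      · exact ⟨0, I.zero_mem, by rw [BBaux.comp_zero, hc0], by simp⟩
      · exact ⟨h, hhI, by rw [← BBaux.DF_eq_comp_of_sup hhsup, hhDF],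
          fun k hk => hhsup ▸ Finset.le_sup hk⟩
    have hcevV : BBaux.comp K n w (f.support.sup (degW n w)) v ∈ V :=
      hVmem (subset_trans (fun k hk => (BBaux.mem_support_comp hk).1) (hVsupp hv))
    have hf'lt : ∀ k ∈ (f - h - BBaux.comp K n w (f.support.sup (degW n w)) v).support,
        degW n w k < f.support.sup (degW n w) := by
      intro k hk
      have hck : coeff k (f - h - BBaux.comp K n w (f.support.sup (degW n w)) v) ≠ 0 :=
        MvPolynomial.mem_support_iff.1 hk
      rcases lt_trichotomy (degW n w k) (f.support.sup (degW n w)) with hlt | heq | hgt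
      · exact hlt
      · exfalso
        apply hck
        have h2 : coeff k (BBaux.comp K n w (f.support.sup (degW n w)) f)
            = coeff k (BBaux.comp K n w (f.support.sup (degW n w)) h) +
              coeff k (BBaux.comp K n w (f.support.sup (degW n w)) v) := by
          rw [hdecomp, ← hhe, MvPolynomial.coeff_add]
        rw [BBaux.coeff_comp, if_pos heq, BBaux.coeff_comp, if_pos heq] at h2
        simp only [MvPolynomial.coeff_sub, h2]
        ring
      · exfalso
        apply hck
        have h1 : coeff k f = 0 := by
          by_contra hc
          exact absurd (Finset.le_sup (f := degW n w)
            (MvPolynomial.mem_support_iff.2 hc)) (by omega)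
        have h2 : coeff k h = 0 := by
          by_contra hc
          exact absurd (hhle k (MvPolynomial.mem_support_iff.2 hc)) (by omega)
        have h3 : coeff k (BBaux.comp K n w (f.support.sup (degW n w)) v) = 0 := by
          rw [BBaux.coeff_comp, if_neg (by omega)]
        simp only [MvPolynomial.coeff_sub, h1, h2, h3]
        ring
    have hfd2 : f = (f - h - BBaux.comp K n w (f.support.sup (degW n w)) v) + h +
        BBaux.comp K n w (f.support.sup (degW n w)) v := by ring
    by_cases h0' : f - h - BBaux.comp K n w (f.support.sup (degW n w)) v = 0
    · rw [hfd2, h0', zero_add]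
      exact Submodule.add_mem _
        (Submodule.mem_sup_left ((Submodule.restrictScalars_mem K _ _).2 hhI))
        (Submodule.mem_sup_right hcevV)
    · have hepos : 0 < f.support.sup (degW n w) := by
        obtain ⟨k, hk⟩ := MvPolynomial.support_nonempty.2 h0'
        have := hf'lt k hk
        omega
      have hlt : (f - h - BBaux.comp K n w (f.support.sup (degW n w)) v).support.sup
          (degW n w) < f.support.sup (degW n w) :=
        (Finset.sup_lt_iff (show (⊥ : ℕ) < f.support.sup (degW n w) from hepos)).2 hf'lt
      have hfmem := IH _ (lt_of_lt_of_le hlt hfd) _ le_rfl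
      rw [hfd2]
      exact Submodule.add_mem _ (Submodule.add_mem _ hfmem
        (Submodule.mem_sup_left ((Submodule.restrictScalars_mem K _ _).2 hhI)))
        (Submodule.mem_sup_right hcevV)
  have hcomplI : IsCompl (Submodule.restrictScalars K I) V := by
    refine ⟨hdisj, codisjoint_iff.2 ?_⟩
    rw [eq_top_iff]
    intro f _
    exact hcod (f.support.sup (degW n w)) f le_rfl
  have hmain : ∀ b ∈ borderSet n O, ∃ gb : MvPolynomial (Fin n) K, gb ∈ I ∧
      (∃ c : (Fin n →₀ ℕ) → K,
        gb = monomial b 1 - ∑ t ∈ O, MvPolynomial.C (c t) * monomial t 1) ∧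
      b ∈ (DF K n w gb).support := by
    intro b hb
    have hbO : b ∉ O := by
      rw [borderSet, Finset.mem_sdiff] at hb
      exact hb.2
    have htop : (monomial b (1 : K)) ∈ Submodule.restrictScalars K I ⊔ V := by
      rw [hcomplI.sup_eq_top]; trivial
    obtain ⟨i, hi, v, hv, hiv⟩ := Submodule.mem_sup.1 htop
    have hgbi : monomial b (1 : K) - v = i := by rw [← hiv]; ring
    have hgbI : monomial b (1 : K) - v ∈ I := by
      rw [hgbi]; exact (Submodule.restrictScalars_mem K _ _).1 hi
    have hsuppv : v.support ⊆ O := hVsupp hv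
    have hvb : coeff b v = 0 := by
      by_contra hc
      exact hbO (hsuppv (MvPolynomial.mem_support_iff.2 hc))
    have hcb : coeff b (monomial b (1 : K) - v) = 1 := by
      rw [MvPolynomial.coeff_sub, hvb, sub_zero, MvPolynomial.coeff_monomial, if_pos rfl]
    have hbsupp : b ∈ (monomial b (1 : K) - v).support :=
      MvPolynomial.mem_support_iff.2 (by rw [hcb]; exact one_ne_zero)
    have hgb0 : monomial b (1 : K) - v ≠ 0 := fun hz => by simp [hz] at hbsupp
    have hsuppgb : (monomial b (1 : K) - v).support ⊆ insert b v.support := by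
      intro k hk
      rcases Finset.mem_union.1 (MvPolynomial.support_sub _ _ _ hk) with h | h
      · rw [show k = b by simpa [MvPolynomial.support_monomial] using h]
        exact Finset.mem_insert_self b _
      · exact Finset.mem_insert_of_mem h
    have hbe : degW n w b ≤ (monomial b (1 : K) - v).support.sup (degW n w) :=
      Finset.le_sup hbsupp
    rcases eq_or_lt_of_le hbe with heq | hgt
    · refine ⟨monomial b 1 - v, hgbI, ⟨fun t => coeff t v, ?_⟩, ?_⟩
      · congr 1
        ext k
        rw [MvPolynomial.coeff_sum]
        simp only [MvPolynomial.C_mul_monomial, mul_one, MvPolynomial.coeff_monomial]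
        rw [Finset.sum_ite_eq']
        split_ifs with hkO
        · rfl
        · exact MvPolynomial.notMem_support_iff.1 fun hc => hkO (hsuppv hc)
      · rw [BBaux.DF_eq_comp, MvPolynomial.mem_support_iff, BBaux.coeff_comp,
          if_pos heq, hcb]
        exact one_ne_zero
    · exfalso
      have hDFgbV : DF K n w (monomial b (1 : K) - v) ∈ V := by
        apply hVmem
        intro k hk
        have hk1 := BBaux.support_DF_subset hk
        have hk2 : degW n w k = (monomial b (1 : K) - v).support.sup (degW n w) := by
          rw [BBaux.DF_eq_comp] at hk
          exact (BBaux.mem_support_comp hk).2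
        have hkb : k ≠ b := fun hkb => by rw [hkb] at hk2; omega
        rcases Finset.mem_insert.1 (hsuppgb hk1) with h | h
        · exact absurd h hkb
        · exact hsuppv h
      exact BBaux.DF_ne_zero hgb0
        (Submodule.disjoint_def.1 hcompl.disjoint _
          ((Submodule.restrictScalars_mem K _ _).2 (hDFmem _ hgbI hgb0)) hDFgbV)
  choose! g hg1 hg2 hg3 using hmain
  exact ⟨g, ⟨fun b hb => ⟨hg1 b hb, hg2 b hb⟩, hcomplI⟩, hg3⟩
end

section
/- If a zero-dimensional ideal I has an O-border basis, then its border form ideal BF_O(I) equals the border term ideal BT_O = (b_1,…,b_ν). -/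
open MvPolynomial Finsupp

/-- Cumulative layers `O ∪ ∂O ∪ ⋯ ∪ ∂ⁱO` of an order ideal. -/
def layers (n : ℕ) (O : Finset (Fin n →₀ ℕ)) : ℕ → Set (Fin n →₀ ℕ)
  | 0 => ↑O
  | i + 1 => layers n O i ∪
      {m | ∃ k : Fin n, ∃ t ∈ layers n O i, m = t + Finsupp.single k 1}

/-- The `O`-index of a monomial: the least `i` with `t ∈ ∂ⁱO`. -/
noncomputable def indO (n : ℕ) (O : Finset (Fin n →₀ ℕ)) (t : Fin n →₀ ℕ) : ℕ :=
  sInf {i | t ∈ layers n O i}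

/-- The border form `BF_O(f)`: the sum of the terms of `f` whose monomials have maximal
`O`-index. -/
noncomputable def BF (K : Type*) [Field K] (n : ℕ) (O : Finset (Fin n →₀ ℕ))
    (f : MvPolynomial (Fin n) K) : MvPolynomial (Fin n) K :=
  ∑ m ∈ f.support.filter (fun m => indO n O m = f.support.sup (indO n O)),
    monomial m (coeff m f)

section Aux
variable {n : ℕ} {O : Finset (Fin n →₀ ℕ)}

lemma layers_mono : Monotone (layers n O) := by
  apply monotone_nat_of_le_succ
  intro i
  exact Set.subset_union_left

lemma mem_layers_add_single {m : Fin n →₀ ℕ} {i : ℕ} (h : m ∈ layers n O i) (k : Fin n) :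
    ∀ c : ℕ, m + Finsupp.single k c ∈ layers n O (i + c) := by
  intro c
  induction c with
  | zero => simpa using h
  | succ c ih =>
      have : m + Finsupp.single k (c+1) = (m + Finsupp.single k c) + Finsupp.single k 1 := by
        rw [add_assoc, ← Finsupp.single_add]
      rw [this]
      exact Or.inr ⟨k, _, ih, rfl⟩

lemma layers_nonempty (h0 : (0 : Fin n →₀ ℕ) ∈ O) (m : Fin n →₀ ℕ) :
    ∃ i, m ∈ layers n O i := by
  induction m using Finsupp.induction with
  | zero => exact ⟨0, h0⟩
  | single_add k c f hk hc ih =>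
      obtain ⟨i, hi⟩ := ih
      exact ⟨i + c, by simpa [add_comm] using mem_layers_add_single hi k c⟩

lemma indO_eq_zero {m : Fin n →₀ ℕ} (h : m ∈ O) : indO n O m = 0 :=
  Nat.sInf_eq_zero.mpr (Or.inl h)

lemma indO_pos (h0 : (0 : Fin n →₀ ℕ) ∈ O) {m : Fin n →₀ ℕ} (h : m ∉ O) :
    1 ≤ indO n O m := by
  rcases Nat.eq_zero_or_pos (indO n O m) with hz | hp
  · exfalso
    have hne : {i | m ∈ layers n O i}.Nonempty := layers_nonempty h0 m
    have := Nat.sInf_mem hne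
    rw [indO] at hz
    rw [hz] at this
    exact h this
  · exact hp

lemma mem_O_of_indO_eq_zero (h0 : (0 : Fin n →₀ ℕ) ∈ O) {m : Fin n →₀ ℕ}
    (h : indO n O m = 0) : m ∈ O := by
  have hne : {i | m ∈ layers n O i}.Nonempty := layers_nonempty h0 m
  have := Nat.sInf_mem hne
  rw [indO] at h
  rw [h] at this
  exact this

lemma borderSet_spec {b : Fin n →₀ ℕ} (hb : b ∈ borderSet n O) :
    b ∉ O ∧ ∃ t ∈ O, ∃ k, b = t + Finsupp.single k 1 := by
  classical
  simp only [borderSet, Finset.mem_sdiff, Finset.mem_biUnion, Finset.mem_image,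
    Finset.mem_univ, true_and] at hb
  obtain ⟨⟨t, ht, k, hk⟩, hbO⟩ := hb
  exact ⟨hbO, t, ht, k, hk.symm⟩

lemma indO_border (h0 : (0 : Fin n →₀ ℕ) ∈ O) {b : Fin n →₀ ℕ} (hb : b ∈ borderSet n O) :
    indO n O b = 1 := by
  obtain ⟨hbO, t, ht, k, hk⟩ := borderSet_spec hb
  have h1 : b ∈ layers n O 1 := Or.inr ⟨k, t, ht, hk⟩
  have hle : indO n O b ≤ 1 := Nat.sInf_le h1
  have := indO_pos h0 hbO
  omega

lemma exists_border_le (h0 : (0 : Fin n →₀ ℕ) ∈ O) :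
    ∀ m : Fin n →₀ ℕ, m ∉ O → ∃ b ∈ borderSet n O, b ≤ m := by
  classical
  suffices H : ∀ d : ℕ, ∀ m : Fin n →₀ ℕ, (∑ i, m i) = d → m ∉ O → ∃ b ∈ borderSet n O, b ≤ m by
    intro m hm; exact H _ m rfl hm
  intro d
  induction d using Nat.strong_induction_on with
  | _ d ih =>
    intro m hd hm
    have hm0 : m ≠ 0 := by rintro rfl; exact hm h0
    obtain ⟨k, hk⟩ : ∃ k, m k ≠ 0 := by
      by_contra h
      push_neg at h
      exact hm0 (Finsupp.ext fun k => h k)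
    have hsle : Finsupp.single k 1 ≤ m := by
      rw [Finsupp.single_le_iff]; omega
    set m' := m - Finsupp.single k 1 with hm'
    have hmm : m' + Finsupp.single k 1 = m := tsub_add_cancel_of_le hsle
    by_cases hO' : m' ∈ O
    · refine ⟨m, ?_, le_refl m⟩
      simp only [borderSet, Finset.mem_sdiff, Finset.mem_biUnion, Finset.mem_image,
        Finset.mem_univ, true_and]
      exact ⟨⟨m', hO', k, hmm⟩, hm⟩
    · have hdeg : (∑ i, m' i) < d := by
        have : (∑ i, m i) = (∑ i, m' i) + ∑ i, (Finsupp.single k 1 : Fin n →₀ ℕ) i := by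
          rw [← hmm]; simp [Finsupp.add_apply, Finset.sum_add_distrib]
        have hs : (∑ i, (Finsupp.single k 1 : Fin n →₀ ℕ) i) = 1 := by
          simp [Finsupp.single_apply]
        omega
      obtain ⟨b, hb, hble⟩ := ih _ hdeg m' rfl hO'
      exact ⟨b, hb, hble.trans (by rw [← hmm]; exact le_self_add)⟩

end Aux

/-- If a zero-dimensional ideal `I` has an `O`-border basis, then its border form ideal
`BF_O(I)` equals the border term ideal `BT_O`. -/
theorem borderFormIdeal_eq_borderTermIdeal (K : Type*) [Field K] (n : ℕ)
    (O : Finset (Fin n →₀ ℕ)) (hne : O.Nonempty)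
    (hO : ∀ t ∈ O, ∀ s : Fin n →₀ ℕ, s ≤ t → s ∈ O)
    (I : Ideal (MvPolynomial (Fin n) K))
    (g : (Fin n →₀ ℕ) → MvPolynomial (Fin n) K)
    (hg : IsBorderBasis K n O I g) :
    Ideal.span {p : MvPolynomial (Fin n) K | ∃ f ∈ I, f ≠ 0 ∧ p = BF K n O f} =
      Ideal.span {p : MvPolynomial (Fin n) K | ∃ b ∈ borderSet n O, p = monomial b 1} := by
  classical
  have h0 : (0 : Fin n →₀ ℕ) ∈ O := by
    obtain ⟨t, ht⟩ := hne; exact hO t ht 0 (zero_le : 0 ≤ t)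
  apply le_antisymm
  · rw [Ideal.span_le]
    rintro p ⟨f, hfI, hf0, rfl⟩
    have hsup : 1 ≤ f.support.sup (indO n O) := by
      by_contra h
      push_neg at h
      have hsub : ∀ m ∈ f.support, m ∈ O := by
        intro m hm
        have := Finset.le_sup (f := indO n O) hm
        exact mem_O_of_indO_eq_zero h0 (by omega)
      have hfspan : f ∈ Submodule.span K
          {p : MvPolynomial (Fin n) K | ∃ t ∈ O, p = monomial t 1} := by
        rw [f.as_sum]
        apply Submodule.sum_mem
        intro m hm
        have he : (monomial m (coeff m f) : MvPolynomial (Fin n) K)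
            = (coeff m f) • monomial m 1 := by
          rw [MvPolynomial.smul_monomial, smul_eq_mul, mul_one]
        rw [he]
        exact Submodule.smul_mem _ _ (Submodule.subset_span ⟨m, hsub m hm, rfl⟩)
      exact hf0 (Submodule.disjoint_def.mp hg.2.disjoint f hfI hfspan)
    unfold BF
    apply Ideal.sum_mem
    intro m hm
    simp only [Finset.mem_filter] at hm
    have hmO : m ∉ O := by
      intro hmem
      have h1 := indO_eq_zero (O := O) hmem
      omega
    obtain ⟨b, hb, hble⟩ := exists_border_le h0 m hmO
    have he : (monomial m (coeff m f) : MvPolynomial (Fin n) K)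
        = monomial (m - b) (coeff m f) * monomial b 1 := by
      rw [MvPolynomial.monomial_mul, tsub_add_cancel_of_le hble, mul_one]
    rw [he]
    exact Ideal.mul_mem_left _ _ (Ideal.subset_span ⟨b, hb, rfl⟩)
  · rw [Ideal.span_le]
    rintro p ⟨b, hb, rfl⟩
    obtain ⟨hgI, c, hc⟩ := hg.1 b hb
    obtain ⟨hbO, -⟩ := borderSet_spec hb
    have hcoeffb : coeff b (g b) = 1 := by
      have hz : ∀ t ∈ O, coeff b (MvPolynomial.C (c t) * monomial t 1) = 0 := by
        intro t ht
        rw [coeff_C_mul, coeff_monomial, if_neg, mul_zero]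
        rintro rfl; exact hbO ht
      rw [hc, coeff_sub, coeff_monomial, if_pos rfl,
        MvPolynomial.coeff_sum, Finset.sum_eq_zero hz, sub_zero]
    have hsupp : ∀ m ∈ (g b).support, m = b ∨ m ∈ O := by
      intro m hm
      by_contra h
      push_neg at h
      obtain ⟨hmb, hmO⟩ := h
      apply MvPolynomial.mem_support_iff.mp hm
      have hz : ∀ t ∈ O, coeff m (MvPolynomial.C (c t) * monomial t 1) = 0 := by
        intro t ht
        rw [coeff_C_mul, coeff_monomial, if_neg, mul_zero]
        rintro rfl; exact hmO ht
      rw [hc, coeff_sub, coeff_monomial, if_neg (fun h' => hmb h'.symm),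
        MvPolynomial.coeff_sum, Finset.sum_eq_zero hz, sub_zero]
    have hbsupp : b ∈ (g b).support :=
      MvPolynomial.mem_support_iff.mpr (by rw [hcoeffb]; exact one_ne_zero)
    have hindle : ∀ m ∈ (g b).support, indO n O m ≤ 1 := by
      intro m hm
      rcases hsupp m hm with rfl | hmO
      · exact (indO_border h0 hb).le
      · simp [indO_eq_zero hmO]
    have hsup : (g b).support.sup (indO n O) = 1 := by
      apply le_antisymm (Finset.sup_le hindle)
      have := Finset.le_sup (f := indO n O) hbsupp
      rwa [indO_border h0 hb] at this
    have hfilter : (g b).support.filter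
        (fun m => indO n O m = (g b).support.sup (indO n O)) = {b} := by
      rw [hsup]
      ext m
      simp only [Finset.mem_filter, Finset.mem_singleton]
      constructor
      · rintro ⟨hm, hind1⟩
        rcases hsupp m hm with rfl | hmO
        · rfl
        · rw [indO_eq_zero hmO] at hind1; exact absurd hind1.symm one_ne_zero
      · rintro rfl
        exact ⟨hbsupp, indO_border h0 hb⟩
    have hBF : BF K n O (g b) = monomial b 1 := by
      rw [BF, hfilter, Finset.sum_singleton, hcoeffb]
    have hgne : g b ≠ 0 := fun h => by
      rw [h, MvPolynomial.coeff_zero] at hcoeffb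
      exact one_ne_zero hcoeffb.symm
    exact Ideal.subset_span ⟨g b, hgI, hgne, hBF.symm⟩
end

section
/- For n = 2 and O = {1, x, y, xy} with border ∂O = {y², x², xy², x²y}, the vanishing ideal I(B_O) ⊂ K[c_{11},…,c_{44}] of the border basis scheme contains, for each of the eight variables c_{11}, c_{12}, c_{13}, c_{14}, c_{22}, c_{24}, c_{31}, c_{33}, a generator of the form (that variable) minus a polynomial in the remaining eight variables c_{21}, c_{23}, c_{32}, c_{34}, c_{41}, c_{42}, c_{43}, c_{44}; consequently B_O = K[c_{ij}]/I(B_O) is isomorphic as a K-algebra to the polynomial ring K[c_{21}, c_{23}, c_{32}, c_{34}, c_{41}, c_{42}, c_{43}, c_{44}]. -/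
set_option maxHeartbeats 1600000
set_option synthInstance.maxHeartbeats 400000


open MvPolynomial

/-- The generic coefficient `c_{(i+1)(j+1)}` for `O = {1, x, y, xy}` (zero-based indices:
`i` indexes the order ideal term, `j` the border term). -/
noncomputable def cgen (K : Type*) [Field K] (i j : Fin 4) :
    MvPolynomial (Fin 4 × Fin 4) K := X (i, j)

/-- The generic multiplication matrix `A_x` for `O = {1, x, y, xy}` with border
`{y², x², xy², x²y}`. -/
noncomputable def Ax (K : Type*) [Field K] :
    Matrix (Fin 4) (Fin 4) (MvPolynomial (Fin 4 × Fin 4) K) :=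
  !![0, cgen K 0 1, 0, cgen K 0 3;
     1, cgen K 1 1, 0, cgen K 1 3;
     0, cgen K 2 1, 0, cgen K 2 3;
     0, cgen K 3 1, 1, cgen K 3 3]

/-- The generic multiplication matrix `A_y` for `O = {1, x, y, xy}`. -/
noncomputable def Ay (K : Type*) [Field K] :
    Matrix (Fin 4) (Fin 4) (MvPolynomial (Fin 4 × Fin 4) K) :=
  !![0, 0, cgen K 0 0, cgen K 0 2;
     0, 0, cgen K 1 0, cgen K 1 2;
     1, 0, cgen K 2 0, cgen K 2 2;
     0, 1, cgen K 3 0, cgen K 3 2]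

/-- The vanishing ideal `I(𝔹_O)` of the border basis scheme for `O = {1, x, y, xy}`:
generated by the entries of `A_x A_y − A_y A_x`. -/
noncomputable def IbbsXY (K : Type*) [Field K] : Ideal (MvPolynomial (Fin 4 × Fin 4) K) :=
  Ideal.span {p | ∃ i j : Fin 4, p = (Ax K * Ay K - Ay K * Ax K) i j}

noncomputable def bbP (K : Type*) [Field K] :
    Matrix (Fin 4) (Fin 4) (MvPolynomial (Fin 4 × Fin 4) K) :=
  !![X (1,2) - X (1,2)*X (3,0)*X (3,1) - X (1,0)*X (3,3) + X (1,0)*X (3,1)*X (3,2),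
     X (2,3) - X (2,3)*X (3,0)*X (3,1) - X (2,1)*X (3,2) + X (2,1)*X (3,0)*X (3,3),
     X (1,2)*X (2,1)*X (3,0) + X (1,0)*X (2,3) - X (1,0)*X (2,1)*X (3,2),
     X (1,2)*X (2,1) + X (1,0)*X (2,3)*X (3,1) - X (1,0)*X (2,1)*X (3,3);
     X (1,0),
     X (3,3) - X (3,1)*X (3,2) - X (2,1)*X (3,0),
     X (1,2),
     X (1,2)*X (3,1) + X (1,0)*X (2,1);
     X (3,2) - X (3,0)*X (3,3) - X (1,0)*X (3,1),
     X (2,1),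
     X (2,3)*X (3,0) + X (1,0)*X (2,1),
     X (2,3);
     X (3,0), X (3,1), X (3,2), X (3,3)]

lemma bb_gen_mem (K : Type*) [Field K] (i j : Fin 4) :
    (Ax K * Ay K - Ay K * Ax K) i j ∈ IbbsXY K :=
  Ideal.subset_span ⟨i, j, rfl⟩

lemma bbe01 (K : Type*) [Field K] : (Ax K * Ay K - Ay K * Ax K) 0 1
    = X (0,3) - X (0,2)*X (3,1) - X (0,0)*X (2,1) := by
  simp [Ax, Ay, cgen, Matrix.mul_apply, Fin.sum_univ_four]; ring
lemma bbe11 (K : Type*) [Field K] : (Ax K * Ay K - Ay K * Ax K) 1 1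
    = X (1,3) - X (1,2)*X (3,1) - X (1,0)*X (2,1) := by
  simp [Ax, Ay, cgen, Matrix.mul_apply, Fin.sum_univ_four]; ring
lemma bbe12 (K : Type*) [Field K] : (Ax K * Ay K - Ay K * Ax K) 1 2
    = X (1,3)*X (3,0) - X (1,2) + X (1,0)*X (1,1) + X (0,0) := by
  simp [Ax, Ay, cgen, Matrix.mul_apply, Fin.sum_univ_four]; ring
lemma bbe13 (K : Type*) [Field K] : (Ax K * Ay K - Ay K * Ax K) 1 3
    = X (1,3)*X (3,2) - X (1,2)*X (3,3) + X (1,1)*X (1,2) - X (1,0)*X (2,3) + X (0,2) := by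
  simp [Ax, Ay, cgen, Matrix.mul_apply, Fin.sum_univ_four]; ring
lemma bbe21 (K : Type*) [Field K] : (Ax K * Ay K - Ay K * Ax K) 2 1
    = X (2,3) - X (2,2)*X (3,1) - X (2,0)*X (2,1) - X (0,1) := by
  simp [Ax, Ay, cgen, Matrix.mul_apply, Fin.sum_univ_four]; ring
lemma bbe22 (K : Type*) [Field K] : (Ax K * Ay K - Ay K * Ax K) 2 2
    = X (2,3)*X (3,0) - X (2,2) + X (1,0)*X (2,1) := by
  simp [Ax, Ay, cgen, Matrix.mul_apply, Fin.sum_univ_four]; ring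
lemma bbe31 (K : Type*) [Field K] : (Ax K * Ay K - Ay K * Ax K) 3 1
    = X (3,3) - X (3,1)*X (3,2) - X (2,1)*X (3,0) - X (1,1) := by
  simp [Ax, Ay, cgen, Matrix.mul_apply, Fin.sum_univ_four]; ring
lemma bbe32 (K : Type*) [Field K] : (Ax K * Ay K - Ay K * Ax K) 3 2
    = - X (3,2) + X (3,0)*X (3,3) + X (2,0) + X (1,0)*X (3,1) := by
  simp [Ax, Ay, cgen, Matrix.mul_apply, Fin.sum_univ_four]; ring

lemma bbmem00 (K : Type*) [Field K] :
    X ((0:Fin 4),(0:Fin 4)) - bbP K 0 0 ∈ IbbsXY K := by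
  have hg := bb_gen_mem K
  have key : X ((0:Fin 4),(0:Fin 4)) - bbP K 0 0
      = (Ax K * Ay K - Ay K * Ax K) 1 2 + X (1,0) * ((Ax K * Ay K - Ay K * Ax K) 3 1)
        - X (3,0) * ((Ax K * Ay K - Ay K * Ax K) 1 1) := by
    rw [bbe12, bbe31, bbe11]; simp [bbP]; try ring
  rw [key]
  exact sub_mem (add_mem (hg 1 2) (Ideal.mul_mem_left _ _ (hg 3 1)))
    (Ideal.mul_mem_left _ _ (hg 1 1))

lemma bbmem01 (K : Type*) [Field K] :
    X ((0:Fin 4),(1:Fin 4)) - bbP K 0 1 ∈ IbbsXY K := by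
  have hg := bb_gen_mem K
  have key : X ((0:Fin 4),(1:Fin 4)) - bbP K 0 1
      = - (Ax K * Ay K - Ay K * Ax K) 2 1 + X (3,1) * ((Ax K * Ay K - Ay K * Ax K) 2 2)
        - X (2,1) * ((Ax K * Ay K - Ay K * Ax K) 3 2) := by
    rw [bbe21, bbe22, bbe32]; simp [bbP]; try ring
  rw [key]
  exact sub_mem (add_mem (neg_mem (hg 2 1)) (Ideal.mul_mem_left _ _ (hg 2 2)))
    (Ideal.mul_mem_left _ _ (hg 3 2))

lemma bbmem02 (K : Type*) [Field K] :
    X ((0:Fin 4),(2:Fin 4)) - bbP K 0 2 ∈ IbbsXY K := by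
  have hg := bb_gen_mem K
  have key : X ((0:Fin 4),(2:Fin 4)) - bbP K 0 2
      = (Ax K * Ay K - Ay K * Ax K) 1 3 + X (1,2) * ((Ax K * Ay K - Ay K * Ax K) 3 1)
        - X (3,2) * ((Ax K * Ay K - Ay K * Ax K) 1 1) := by
    rw [bbe13, bbe31, bbe11]; simp [bbP]; try ring
  rw [key]
  exact sub_mem (add_mem (hg 1 3) (Ideal.mul_mem_left _ _ (hg 3 1)))
    (Ideal.mul_mem_left _ _ (hg 1 1))

lemma bbmem03 (K : Type*) [Field K] :
    X ((0:Fin 4),(3:Fin 4)) - bbP K 0 3 ∈ IbbsXY K := by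
  have hg := bb_gen_mem K
  have key : X ((0:Fin 4),(3:Fin 4)) - bbP K 0 3
      = (Ax K * Ay K - Ay K * Ax K) 0 1
        + X (3,1) * ((Ax K * Ay K - Ay K * Ax K) 1 3
            + X (1,2) * ((Ax K * Ay K - Ay K * Ax K) 3 1)
            - X (3,2) * ((Ax K * Ay K - Ay K * Ax K) 1 1))
        + X (2,1) * ((Ax K * Ay K - Ay K * Ax K) 1 2
            + X (1,0) * ((Ax K * Ay K - Ay K * Ax K) 3 1)
            - X (3,0) * ((Ax K * Ay K - Ay K * Ax K) 1 1)) := by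
    rw [bbe01, bbe13, bbe31, bbe11, bbe12]; simp [bbP]; try ring
  rw [key]
  refine add_mem (add_mem (hg 0 1) (Ideal.mul_mem_left _ _ ?_)) (Ideal.mul_mem_left _ _ ?_)
  · exact sub_mem (add_mem (hg 1 3) (Ideal.mul_mem_left _ _ (hg 3 1)))
      (Ideal.mul_mem_left _ _ (hg 1 1))
  · exact sub_mem (add_mem (hg 1 2) (Ideal.mul_mem_left _ _ (hg 3 1)))
      (Ideal.mul_mem_left _ _ (hg 1 1))

lemma bbmem11 (K : Type*) [Field K] :
    X ((1:Fin 4),(1:Fin 4)) - bbP K 1 1 ∈ IbbsXY K := by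
  have key : X ((1:Fin 4),(1:Fin 4)) - bbP K 1 1
      = - (Ax K * Ay K - Ay K * Ax K) 3 1 := by rw [bbe31]; simp [bbP]; try ring
  rw [key]; exact neg_mem (bb_gen_mem K 3 1)

lemma bbmem13 (K : Type*) [Field K] :
    X ((1:Fin 4),(3:Fin 4)) - bbP K 1 3 ∈ IbbsXY K := by
  have key : X ((1:Fin 4),(3:Fin 4)) - bbP K 1 3
      = (Ax K * Ay K - Ay K * Ax K) 1 1 := by rw [bbe11]; simp [bbP]; try ring
  rw [key]; exact bb_gen_mem K 1 1

lemma bbmem20 (K : Type*) [Field K] :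
    X ((2:Fin 4),(0:Fin 4)) - bbP K 2 0 ∈ IbbsXY K := by
  have key : X ((2:Fin 4),(0:Fin 4)) - bbP K 2 0
      = (Ax K * Ay K - Ay K * Ax K) 3 2 := by rw [bbe32]; simp [bbP]; try ring
  rw [key]; exact bb_gen_mem K 3 2

lemma bbmem22 (K : Type*) [Field K] :
    X ((2:Fin 4),(2:Fin 4)) - bbP K 2 2 ∈ IbbsXY K := by
  have key : X ((2:Fin 4),(2:Fin 4)) - bbP K 2 2
      = - (Ax K * Ay K - Ay K * Ax K) 2 2 := by rw [bbe22]; simp [bbP]; try ring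
  rw [key]; exact neg_mem (bb_gen_mem K 2 2)

def bbFree : Fin 8 → Fin 4 × Fin 4 :=
  ![(1,0), (1,2), (2,1), (2,3), (3,0), (3,1), (3,2), (3,3)]

noncomputable def bbF (K : Type*) [Field K] :
    Matrix (Fin 4) (Fin 4) (MvPolynomial (Fin 8) K) :=
  !![X 1 - X 1*X 4*X 5 - X 0*X 7 + X 0*X 5*X 6,
     X 3 - X 3*X 4*X 5 - X 2*X 6 + X 2*X 4*X 7,
     X 1*X 2*X 4 + X 0*X 3 - X 0*X 2*X 6,
     X 1*X 2 + X 0*X 3*X 5 - X 0*X 2*X 7;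
     X 0, X 7 - X 5*X 6 - X 2*X 4, X 1, X 1*X 5 + X 0*X 2;
     X 6 - X 4*X 7 - X 0*X 5, X 2, X 3*X 4 + X 0*X 2, X 3;
     X 4, X 5, X 6, X 7]

noncomputable def bbφ (K : Type*) [Field K] :
    MvPolynomial (Fin 4 × Fin 4) K →ₐ[K] MvPolynomial (Fin 8) K :=
  aeval (fun v => bbF K v.1 v.2)
lemma bbe02 (K : Type*) [Field K] : (Ax K * Ay K - Ay K * Ax K) 0 2
    = X (0,3)*X (3,0) - X (0,2) + X (0,1)*X (1,0) := by
  simp [Ax, Ay, cgen, Matrix.mul_apply, Fin.sum_univ_four]; try ring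
lemma bbe03 (K : Type*) [Field K] : (Ax K * Ay K - Ay K * Ax K) 0 3
    = X (0,3)*X (3,2) - X (0,2)*X (3,3) + X (0,1)*X (1,2) - X (0,0)*X (2,3) := by
  simp [Ax, Ay, cgen, Matrix.mul_apply, Fin.sum_univ_four]; try ring
lemma bbe23 (K : Type*) [Field K] : (Ax K * Ay K - Ay K * Ax K) 2 3
    = X (2,3)*X (3,2) - X (2,2)*X (3,3) - X (2,0)*X (2,3) + X (1,2)*X (2,1) - X (0,3) := by
  simp [Ax, Ay, cgen, Matrix.mul_apply, Fin.sum_univ_four]; try ring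
lemma bbe33 (K : Type*) [Field K] : (Ax K * Ay K - Ay K * Ax K) 3 3
    = - (X (2,3)*X (3,0)) + X (2,2) - X (1,3) + X (1,2)*X (3,1) := by
  simp [Ax, Ay, cgen, Matrix.mul_apply, Fin.sum_univ_four]; try ring
lemma bbe00 (K : Type*) [Field K] : (Ax K * Ay K - Ay K * Ax K) 0 0 = 0 := by
  simp [Ax, Ay, cgen, Matrix.mul_apply, Fin.sum_univ_four]; try ring
lemma bbe10 (K : Type*) [Field K] : (Ax K * Ay K - Ay K * Ax K) 1 0 = 0 := by
  simp [Ax, Ay, cgen, Matrix.mul_apply, Fin.sum_univ_four]; try ring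
lemma bbe20 (K : Type*) [Field K] : (Ax K * Ay K - Ay K * Ax K) 2 0 = 0 := by
  simp [Ax, Ay, cgen, Matrix.mul_apply, Fin.sum_univ_four]; try ring
lemma bbe30 (K : Type*) [Field K] : (Ax K * Ay K - Ay K * Ax K) 3 0 = 0 := by
  simp [Ax, Ay, cgen, Matrix.mul_apply, Fin.sum_univ_four]; try ring

lemma bbφX (K : Type*) [Field K] (u : Fin 4 × Fin 4) :
    bbφ K (X u) = bbF K u.1 u.2 := by simp only [bbφ, aeval_X]

lemma bbker (K : Type*) [Field K] (i j : Fin 4) :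
    bbφ K ((Ax K * Ay K - Ay K * Ax K) i j) = 0 := by
  have h01 : bbφ K ((Ax K * Ay K - Ay K * Ax K) 0 1) = 0 := by
    rw [bbe01]; simp only [map_sub, map_add, map_mul, map_neg, bbφX]; simp [bbF]; try ring
  have h02 : bbφ K ((Ax K * Ay K - Ay K * Ax K) 0 2) = 0 := by
    rw [bbe02]; simp only [map_sub, map_add, map_mul, map_neg, bbφX]; simp [bbF]; try ring
  have h03 : bbφ K ((Ax K * Ay K - Ay K * Ax K) 0 3) = 0 := by
    rw [bbe03]; simp only [map_sub, map_add, map_mul, map_neg, bbφX]; simp [bbF]; try ring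
  have h11 : bbφ K ((Ax K * Ay K - Ay K * Ax K) 1 1) = 0 := by
    rw [bbe11]; simp only [map_sub, map_add, map_mul, map_neg, bbφX]; simp [bbF]; try ring
  have h12 : bbφ K ((Ax K * Ay K - Ay K * Ax K) 1 2) = 0 := by
    rw [bbe12]; simp only [map_sub, map_add, map_mul, map_neg, bbφX]; simp [bbF]; try ring
  have h13 : bbφ K ((Ax K * Ay K - Ay K * Ax K) 1 3) = 0 := by
    rw [bbe13]; simp only [map_sub, map_add, map_mul, map_neg, bbφX]; simp [bbF]; try ring
  have h21 : bbφ K ((Ax K * Ay K - Ay K * Ax K) 2 1) = 0 := by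
    rw [bbe21]; simp only [map_sub, map_add, map_mul, map_neg, bbφX]; simp [bbF]; try ring
  have h22 : bbφ K ((Ax K * Ay K - Ay K * Ax K) 2 2) = 0 := by
    rw [bbe22]; simp only [map_sub, map_add, map_mul, map_neg, bbφX]; simp [bbF]; try ring
  have h23 : bbφ K ((Ax K * Ay K - Ay K * Ax K) 2 3) = 0 := by
    rw [bbe23]; simp only [map_sub, map_add, map_mul, map_neg, bbφX]; simp [bbF]; try ring
  have h31 : bbφ K ((Ax K * Ay K - Ay K * Ax K) 3 1) = 0 := by
    rw [bbe31]; simp only [map_sub, map_add, map_mul, map_neg, bbφX]; simp [bbF]; try ring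
  have h32 : bbφ K ((Ax K * Ay K - Ay K * Ax K) 3 2) = 0 := by
    rw [bbe32]; simp only [map_sub, map_add, map_mul, map_neg, bbφX]; simp [bbF]; try ring
  have h33 : bbφ K ((Ax K * Ay K - Ay K * Ax K) 3 3) = 0 := by
    rw [bbe33]; simp only [map_sub, map_add, map_mul, map_neg, bbφX]; simp [bbF]; try ring
  have h00 : bbφ K ((Ax K * Ay K - Ay K * Ax K) 0 0) = 0 := by rw [bbe00]; exact map_zero _
  have h10 : bbφ K ((Ax K * Ay K - Ay K * Ax K) 1 0) = 0 := by rw [bbe10]; exact map_zero _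
  have h20 : bbφ K ((Ax K * Ay K - Ay K * Ax K) 2 0) = 0 := by rw [bbe20]; exact map_zero _
  have h30 : bbφ K ((Ax K * Ay K - Ay K * Ax K) 3 0) = 0 := by rw [bbe30]; exact map_zero _
  fin_cases i <;> fin_cases j
  · exact h00
  · exact h01
  · exact h02
  · exact h03
  · exact h10
  · exact h11
  · exact h12
  · exact h13
  · exact h20
  · exact h21
  · exact h22
  · exact h23
  · exact h30
  · exact h31
  · exact h32
  · exact h33


noncomputable def bbψ (K : Type*) [Field K] :
    MvPolynomial (Fin 8) K →ₐ[K] (MvPolynomial (Fin 4 × Fin 4) K ⧸ IbbsXY K) :=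
  aeval (fun k => Ideal.Quotient.mk (IbbsXY K) (X (bbFree k)))

lemma bbFree0 : bbFree 0 = (1,0) := rfl
lemma bbFree1 : bbFree 1 = (1,2) := rfl
lemma bbFree2 : bbFree 2 = (2,1) := rfl
lemma bbFree3 : bbFree 3 = (2,3) := rfl
lemma bbFree4 : bbFree 4 = (3,0) := rfl
lemma bbFree5 : bbFree 5 = (3,1) := rfl
lemma bbFree6 : bbFree 6 = (3,2) := rfl
lemma bbFree7 : bbFree 7 = (3,3) := rfl

lemma bbker_le (K : Type*) [Field K] :
    IbbsXY K ≤ RingHom.ker (bbφ K).toRingHom := by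
  rw [IbbsXY, Ideal.span_le]
  rintro p ⟨i, j, rfl⟩
  exact RingHom.mem_ker.mpr (bbker K i j)

noncomputable def bbφbar (K : Type*) [Field K] :
    (MvPolynomial (Fin 4 × Fin 4) K ⧸ IbbsXY K) →ₐ[K] MvPolynomial (Fin 8) K :=
  Ideal.Quotient.liftₐ (IbbsXY K) (bbφ K) (fun a ha => RingHom.mem_ker.mp (bbker_le K ha))

lemma bbφbar_mk (K : Type*) [Field K] (p : MvPolynomial (Fin 4 × Fin 4) K) :
    bbφbar K (Ideal.Quotient.mk (IbbsXY K) p) = bbφ K p := by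
  simp [bbφbar, Ideal.Quotient.liftₐ_apply, Ideal.Quotient.lift_mk]
  exact Ideal.Quotient.lift_mk _ _ _

lemma bbmem (K : Type*) [Field K] (i j : Fin 4) :
    X ((i, j) : Fin 4 × Fin 4) - bbP K i j ∈ IbbsXY K := by
  fin_cases i <;> fin_cases j
  · exact bbmem00 K
  · exact bbmem01 K
  · exact bbmem02 K
  · exact bbmem03 K
  · simp [bbP]
  · exact bbmem11 K
  · simp [bbP]
  · exact bbmem13 K
  · exact bbmem20 K
  · simp [bbP]
  · exact bbmem22 K
  · simp [bbP]
  · simp [bbP]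
  · simp [bbP]
  · simp [bbP]
  · simp [bbP]

lemma bbcompat (K : Type*) [Field K] (i j : Fin 4) :
    bbψ K (bbF K i j) = Ideal.Quotient.mk (IbbsXY K) (bbP K i j) := by
  fin_cases i <;> fin_cases j <;>
    · simp [bbψ, bbF, bbP, bbFree0, bbFree1, bbFree2, bbFree3, bbFree4, bbFree5, bbFree6, bbFree7]
      try ring

lemma bbmain (K : Type*) [Field K] (i j : Fin 4) :
    bbψ K (bbφ K (X ((i, j) : Fin 4 × Fin 4)))
      = Ideal.Quotient.mk (IbbsXY K) (X ((i, j) : Fin 4 × Fin 4)) := by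
  rw [bbφX, bbcompat]
  exact (Ideal.Quotient.eq.mpr (bbmem K i j)).symm

/-- For `O = {1, x, y, xy}` the ideal `I(𝔹_O)` contains, for each of the eight dependent
variables `c₁₁, c₁₂, c₁₃, c₁₄, c₂₂, c₂₄, c₃₁, c₃₃`, a generator of the form
(that variable) − (a polynomial in the eight free variables
`c₂₁, c₂₃, c₃₂, c₃₄, c₄₁, c₄₂, c₄₃, c₄₄`); consequently
`B_O = K[c_{ij}]/I(𝔹_O)` is isomorphic as a `K`-algebra to a polynomial ring in
eight indeterminates. -/
theorem borderBasisScheme_1xy_affineCell (K : Type*) [Field K] :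
    (∀ v ∈ ({(0, 0), (0, 1), (0, 2), (0, 3), (1, 1), (1, 3), (2, 0), (2, 2)} :
        Finset (Fin 4 × Fin 4)),
      ∃ p ∈ Algebra.adjoin K
          ((fun u : Fin 4 × Fin 4 => (X u : MvPolynomial (Fin 4 × Fin 4) K)) ''
            ({(1, 0), (1, 2), (2, 1), (2, 3), (3, 0), (3, 1), (3, 2), (3, 3)} :
              Set (Fin 4 × Fin 4))),
        X v - p ∈ IbbsXY K) ∧
    Nonempty ((MvPolynomial (Fin 4 × Fin 4) K ⧸ IbbsXY K) ≃ₐ[K] MvPolynomial (Fin 8) K) := by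
  constructor
  · set A := Algebra.adjoin K
      ((fun u : Fin 4 × Fin 4 => (X u : MvPolynomial (Fin 4 × Fin 4) K)) ''
        ({(1, 0), (1, 2), (2, 1), (2, 3), (3, 0), (3, 1), (3, 2), (3, 3)} :
          Set (Fin 4 × Fin 4))) with hA
    have hX : ∀ u ∈ ({(1, 0), (1, 2), (2, 1), (2, 3), (3, 0), (3, 1), (3, 2), (3, 3)} :
        Set (Fin 4 × Fin 4)), (X u : MvPolynomial (Fin 4 × Fin 4) K) ∈ A :=
      fun u hu => Algebra.subset_adjoin ⟨u, hu, rfl⟩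
    have h10 : (X ((1,0) : Fin 4 × Fin 4) : MvPolynomial (Fin 4 × Fin 4) K) ∈ A := hX _ (by simp)
    have h12 : (X ((1,2) : Fin 4 × Fin 4) : MvPolynomial (Fin 4 × Fin 4) K) ∈ A := hX _ (by simp)
    have h21 : (X ((2,1) : Fin 4 × Fin 4) : MvPolynomial (Fin 4 × Fin 4) K) ∈ A := hX _ (by simp)
    have h23 : (X ((2,3) : Fin 4 × Fin 4) : MvPolynomial (Fin 4 × Fin 4) K) ∈ A := hX _ (by simp)
    have h30 : (X ((3,0) : Fin 4 × Fin 4) : MvPolynomial (Fin 4 × Fin 4) K) ∈ A := hX _ (by simp)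
    have h31 : (X ((3,1) : Fin 4 × Fin 4) : MvPolynomial (Fin 4 × Fin 4) K) ∈ A := hX _ (by simp)
    have h32 : (X ((3,2) : Fin 4 × Fin 4) : MvPolynomial (Fin 4 × Fin 4) K) ∈ A := hX _ (by simp)
    have h33 : (X ((3,3) : Fin 4 × Fin 4) : MvPolynomial (Fin 4 × Fin 4) K) ∈ A := hX _ (by simp)
    have hP : ∀ i j : Fin 4, bbP K i j ∈ A := by
      intro i j
      fin_cases i <;> fin_cases j <;>
        · simp only [bbP, Matrix.cons_val', Matrix.cons_val_zero, Matrix.cons_val_one,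
            Matrix.head_cons, Matrix.empty_val', Matrix.cons_val_fin_one, Matrix.head_fin_const,
            Matrix.of_apply, Matrix.cons_val_two, Matrix.cons_val_three, Matrix.tail_cons,
            Fin.mk_zero, Fin.mk_one, Fin.reduceFinMk]
          first
          | with_reducible exact A.add_mem (A.sub_mem (A.sub_mem h12 (A.mul_mem (A.mul_mem h12 h30) h31))
              (A.mul_mem h10 h33)) (A.mul_mem (A.mul_mem h10 h31) h32)
          | with_reducible exact A.add_mem (A.sub_mem (A.sub_mem h23 (A.mul_mem (A.mul_mem h23 h30) h31))
              (A.mul_mem h21 h32)) (A.mul_mem (A.mul_mem h21 h30) h33)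
          | with_reducible exact A.sub_mem (A.add_mem (A.mul_mem (A.mul_mem h12 h21) h30)
              (A.mul_mem h10 h23)) (A.mul_mem (A.mul_mem h10 h21) h32)
          | with_reducible exact A.sub_mem (A.add_mem (A.mul_mem h12 h21)
              (A.mul_mem (A.mul_mem h10 h23) h31)) (A.mul_mem (A.mul_mem h10 h21) h33)
          | with_reducible exact A.sub_mem (A.sub_mem h33 (A.mul_mem h31 h32)) (A.mul_mem h21 h30)
          | with_reducible exact A.add_mem (A.mul_mem h12 h31) (A.mul_mem h10 h21)
          | with_reducible exact A.sub_mem (A.sub_mem h32 (A.mul_mem h30 h33)) (A.mul_mem h10 h31)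
          | with_reducible exact A.add_mem (A.mul_mem h23 h30) (A.mul_mem h10 h21)
          | with_reducible exact h10 | with_reducible exact h12 | with_reducible exact h21 | with_reducible exact h23
          | with_reducible exact h30 | with_reducible exact h31 | with_reducible exact h32 | with_reducible exact h33
    intro v hv
    fin_cases hv
    · exact ⟨bbP K 0 0, hP 0 0, bbmem K 0 0⟩
    · exact ⟨bbP K 0 1, hP 0 1, bbmem K 0 1⟩
    · exact ⟨bbP K 0 2, hP 0 2, bbmem K 0 2⟩
    · exact ⟨bbP K 0 3, hP 0 3, bbmem K 0 3⟩
    · exact ⟨bbP K 1 1, hP 1 1, bbmem K 1 1⟩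
    · exact ⟨bbP K 1 3, hP 1 3, bbmem K 1 3⟩
    · exact ⟨bbP K 2 0, hP 2 0, bbmem K 2 0⟩
    · exact ⟨bbP K 2 2, hP 2 2, bbmem K 2 2⟩
  · refine ⟨AlgEquiv.ofAlgHom (bbφbar K) (bbψ K) ?_ ?_⟩
    · apply MvPolynomial.algHom_ext
      intro k
      fin_cases k <;>
        simp [bbψ, bbFree0, bbFree1, bbFree2, bbFree3, bbFree4, bbFree5, bbFree6, bbFree7,
          bbφbar_mk, bbφ, bbF]
    · apply Ideal.Quotient.algHom_ext
      apply MvPolynomial.algHom_ext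
      rintro ⟨i, j⟩
      simp only [AlgHom.comp_apply, Ideal.Quotient.mkₐ_eq_mk, AlgHom.id_apply, bbφbar_mk]
      exact bbmain K i j
end
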